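/- arXiv:2103.14351 — 6 statements merged into one kernel-verified Lean document; each statement's English description precedes it below -/
import Mathlib

section
/- For every r ∈ [0,1], the map g^{(r)} : Δ → ℝ^d defined by g^{(r)}(p) = p + (1/2) f^{(r)}(p) is continuous, maps Δ into Δ (in particular Σ_i f^{(r)}_i(p) = 0 and g^{(r)}_i(p) ≥ 0 for all p ∈ Δ and all i), and has a fixed point in Δ; equivalently, f^{(r)} has a zero in Δ. -/
open Finset

/-- The L¹ distance on `ℝ^d`. -/
noncomputable def l1dist {m : ℕ} (x y : Fin m → ℝ) : ℝ := ∑ i, |x i - y i|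

/-- The unit simplex in `ℝ^d`. -/
def unitSimplex (d : ℕ) : Set (Fin d → ℝ) := {x | (∀ i, 0 ≤ x i) ∧ ∑ i, x i = 1}

/-- The vector field `f^{(r)}` with `f^{(r)}_i(p) = 2(1−r) p_i (M̃p)_i + r(1/d − p_i)`. -/
noncomputable def fvec (d : ℕ) (Mt : Matrix (Fin d) (Fin d) ℝ) (r : ℝ) :
    (Fin d → ℝ) → Fin d → ℝ :=
  fun p i => 2 * (1 - r) * p i * Mt.mulVec p i + r * (1 / (d : ℝ) - p i)

section Aux
variable {d : ℕ}

/-- The truncated simplex. -/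
def SE (d : ℕ) (ε : ℝ) : Set (Fin d → ℝ) := {x | (∀ i, ε ≤ x i) ∧ ∑ i, x i = 1}

lemma SE_le_one {ε : ℝ} (hε : 0 ≤ ε) {x : Fin d → ℝ} (hx : x ∈ SE d ε) (i : Fin d) :
    x i ≤ 1 := by
  have h1 := hx.2
  have h2 : x i ≤ ∑ j, x j :=
    Finset.single_le_sum (fun j _ => le_trans hε (hx.1 j)) (Finset.mem_univ i)
  linarith

lemma SE_closed (ε : ℝ) : IsClosed (SE d ε) := by
  have h1 : IsClosed {x : Fin d → ℝ | ∀ i, ε ≤ x i} := by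
    have : {x : Fin d → ℝ | ∀ i, ε ≤ x i} = ⋂ i, {x | ε ≤ x i} := by
      ext x; simp
    rw [this]
    exact isClosed_iInter fun i => isClosed_le continuous_const (continuous_apply i)
  have h2 : IsClosed {x : Fin d → ℝ | ∑ i, x i = 1} :=
    isClosed_eq (continuous_finset_sum _ fun i _ => continuous_apply i) continuous_const
  exact h1.inter h2

lemma SE_compact {ε : ℝ} (hε : 0 ≤ ε) : IsCompact (SE d ε) := by
  apply IsCompact.of_isClosed_subset (isCompact_Icc (a := fun _ : Fin d => (0:ℝ))
    (b := fun _ => 1)) (SE_closed ε)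
  intro x hx
  constructor
  · intro i; exact le_trans hε (hx.1 i)
  · intro i; exact SE_le_one hε hx i

lemma skew_quad (Mt : Matrix (Fin d) (Fin d) ℝ) (hskew : ∀ i j, Mt j i = - Mt i j)
    (p : Fin d → ℝ) : ∑ i, p i * Mt.mulVec p i = 0 := by
  have h : ∑ i, p i * Mt.mulVec p i = ∑ i, ∑ j, p i * (Mt i j * p j) := by
    simp [Matrix.mulVec, dotProduct, Finset.mul_sum]
  have h2 : ∑ i, ∑ j, p i * (Mt i j * p j) = - ∑ i, ∑ j, p i * (Mt i j * p j) := by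
    nth_rewrite 1 [Finset.sum_comm]
    rw [← Finset.sum_neg_distrib]
    apply Finset.sum_congr rfl; intro i _
    rw [← Finset.sum_neg_distrib]
    apply Finset.sum_congr rfl; intro j _
    rw [hskew]; ring
  linarith [h, h2]

lemma mulVec_abs_le (Mt : Matrix (Fin d) (Fin d) ℝ) (hbound : ∀ i j, |Mt i j| ≤ 1)
    (w : Fin d → ℝ) (i : Fin d) : |Mt.mulVec w i| ≤ ∑ j, |w j| := by
  have : Mt.mulVec w i = ∑ j, Mt i j * w j := by
    simp [Matrix.mulVec, dotProduct]
  rw [this]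
  calc |∑ j, Mt i j * w j| ≤ ∑ j, |Mt i j * w j| := Finset.abs_sum_le_sum_abs _ _
    _ ≤ ∑ j, |w j| := by
        apply Finset.sum_le_sum; intro j _
        rw [abs_mul]
        calc |Mt i j| * |w j| ≤ 1 * |w j| :=
              mul_le_mul_of_nonneg_right (hbound i j) (abs_nonneg _)
          _ = |w j| := one_mul _

lemma mulVec_bound (Mt : Matrix (Fin d) (Fin d) ℝ) (hbound : ∀ i j, |Mt i j| ≤ 1)
    {p : Fin d → ℝ} (hp0 : ∀ i, 0 ≤ p i) (hp1 : ∑ i, p i = 1) (i : Fin d) :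
    |Mt.mulVec p i| ≤ 1 := by
  calc |Mt.mulVec p i| ≤ ∑ j, |p j| := mulVec_abs_le Mt hbound p i
    _ = ∑ j, p j := by apply Finset.sum_congr rfl; intro j _; exact abs_of_nonneg (hp0 j)
    _ = 1 := hp1

lemma log_concave_aux {x y t : ℝ} (hx : 0 < x) (hy : 0 < y) (ht0 : 0 ≤ t) (ht1 : t ≤ 1) :
    (1 - t) * Real.log x + t * Real.log y ≤ Real.log ((1 - t) * x + t * y) := by
  set m := (1 - t) * x + t * y with hm
  have hmpos : 0 < m := by
    rw [hm]
    rcases lt_or_eq_of_le ht1 with h | h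
    · nlinarith [mul_pos (show (0:ℝ) < 1 - t by linarith) hx, mul_nonneg ht0 hy.le]
    · subst h; simpa using hy
  have h1 : Real.log x - Real.log m ≤ x / m - 1 := by
    have := Real.log_le_sub_one_of_pos (x := x / m) (div_pos hx hmpos)
    rwa [Real.log_div hx.ne' hmpos.ne'] at this
  have h2 : Real.log y - Real.log m ≤ y / m - 1 := by
    have := Real.log_le_sub_one_of_pos (x := y / m) (div_pos hy hmpos)
    rwa [Real.log_div hy.ne' hmpos.ne'] at this
  have key : (1 - t) * (x / m - 1) + t * (y / m - 1) = 0 := by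
    field_simp
    rw [hm]; ring
  nlinarith [mul_le_mul_of_nonneg_left h1 (by linarith : (0:ℝ) ≤ 1 - t),
    mul_le_mul_of_nonneg_left h2 ht0]

lemma log_midpoint {x y : ℝ} (hx : 0 < x) (hx1 : x ≤ 1) (hy : 0 < y) (hy1 : y ≤ 1) :
    Real.log x / 2 + Real.log y / 2 + (x - y) ^ 2 / 8 ≤ Real.log ((x + y) / 2) := by
  set m := (x + y) / 2 with hm
  have hmpos : 0 < m := by positivity
  have hm1 : m ≤ 1 := by rw [hm]; linarith
  set s := (x - y) / (2 * m) with hs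
  have hxe : x = m * (1 + s) := by rw [hs, hm]; field_simp; ring
  have hye : y = m * (1 - s) := by rw [hs, hm]; field_simp; ring
  have hs1 : 1 + s > 0 := by
    by_contra h
    push_neg at h
    nlinarith [hxe]
  have hs2 : 1 - s > 0 := by
    by_contra h
    push_neg at h
    nlinarith [hye]
  have hlx : Real.log x = Real.log m + Real.log (1 + s) := by
    rw [hxe, Real.log_mul hmpos.ne' (by linarith)]
  have hly : Real.log y = Real.log m + Real.log (1 - s) := by
    rw [hye, Real.log_mul hmpos.ne' (by linarith)]
  have hprod : (1 + s) * (1 - s) = 1 - s ^ 2 := by ring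
  have hls : Real.log (1 + s) + Real.log (1 - s) ≤ - s ^ 2 := by
    rw [← Real.log_mul (by linarith) (by linarith), hprod]
    have h0 : (0:ℝ) < 1 - s ^ 2 := by nlinarith
    have := Real.log_le_sub_one_of_pos h0
    linarith
  have hsq : (x - y) ^ 2 = 4 * m ^ 2 * s ^ 2 := by
    rw [hs]
    field_simp
    ring
  have hsqle : (x - y) ^ 2 ≤ 4 * s ^ 2 := by
    rw [hsq]
    have hm2 : m ^ 2 ≤ 1 := by nlinarith
    nlinarith [mul_nonneg (show (0:ℝ) ≤ 1 - m ^ 2 by linarith) (sq_nonneg s)]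
  linarith [hlx, hly, hls, hsqle]

lemma log_lipschitz {ε x y : ℝ} (hε : 0 < ε) (hx : ε ≤ x) (hy : ε ≤ y) :
    |Real.log x - Real.log y| ≤ |x - y| / ε := by
  wlog h : y ≤ x generalizing x y
  · rw [abs_sub_comm, abs_sub_comm x y]; exact this hy hx (by linarith)
  have hxp : 0 < x := lt_of_lt_of_le hε hx
  have hyp : 0 < y := lt_of_lt_of_le hε hy
  have h1 : Real.log x - Real.log y ≤ (x - y) / ε := by
    have h2 := Real.log_le_sub_one_of_pos (x := x / y) (div_pos hxp hyp)
    rw [Real.log_div hxp.ne' hyp.ne'] at h2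
    have h3 : x / y - 1 = (x - y) / y := by field_simp
    have h4 : (x - y) / y ≤ (x - y) / ε :=
      div_le_div_of_nonneg_left (by linarith) hε hy
    linarith
  have h5 : 0 ≤ Real.log x - Real.log y := by
    have := Real.log_le_log hyp h
    linarith
  rw [abs_of_nonneg h5, abs_of_nonneg (by linarith : (0:ℝ) ≤ x - y)]
  exact h1

/-- The entropy-perturbed game payoff. -/
noncomputable def uu (d : ℕ) (Mt : Matrix (Fin d) (Fin d) ℝ) (a b : ℝ)
    (x p : Fin d → ℝ) : ℝ :=
  a * ∑ i, x i * Mt.mulVec p i + b * ∑ i, Real.log (x i) - b * ∑ i, Real.log (p i)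

end Aux

set_option maxHeartbeats 1000000 in
lemma exists_symmetric_max (d : ℕ) (hd : 1 ≤ d) (Mt : Matrix (Fin d) (Fin d) ℝ)
    (hskew : ∀ i j, Mt j i = - Mt i j) (hbound : ∀ i j, |Mt i j| ≤ 1)
    (a b ε : ℝ) (ha : 0 < a) (hb : 0 < b) (hε : 0 < ε) (hεd : ε ≤ 1/(2*(d:ℝ))) :
    ∃ p ∈ SE d ε, ∀ x ∈ SE d ε, uu d Mt a b x p ≤ 0 := by
  have hdr : (0:ℝ) < d := by exact_mod_cast Nat.lt_of_lt_of_le Nat.zero_lt_one hd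
  set S := SE d ε with hS
  have hSmem : ∀ x ∈ S, (∀ i, ε ≤ x i) ∧ ∑ i, x i = 1 := fun x hx => hx
  have hSne : S.Nonempty := by
    refine ⟨fun _ => 1/(d:ℝ), ⟨fun i => ?_, ?_⟩⟩
    · calc ε ≤ 1/(2*(d:ℝ)) := hεd
        _ ≤ 1/(d:ℝ) := by gcongr; linarith
    · simp only [Finset.sum_const, Finset.card_univ, Fintype.card_fin, nsmul_eq_mul]
      rw [one_div]
      exact mul_inv_cancel₀ hdr.ne'
  have hScomp : IsCompact S := SE_compact hε.le
  have ucont : ∀ p : Fin d → ℝ, ContinuousOn (fun x => uu d Mt a b x p) S := by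
    intro p
    apply ContinuousOn.sub
    apply ContinuousOn.add
    · exact (continuous_const.mul (continuous_finset_sum _ fun i _ =>
        (continuous_apply i).mul continuous_const)).continuousOn
    · apply ContinuousOn.mul continuousOn_const
      apply continuousOn_finset_sum
      intro i _
      exact ((continuous_apply i).continuousOn).log
        (fun x hx => ne_of_gt (lt_of_lt_of_le hε ((hSmem x hx).1 i)))
    · exact continuousOn_const
  have hargmax : ∀ p : Fin d → ℝ, ∃ x ∈ S, ∀ y ∈ S, uu d Mt a b y p ≤ uu d Mt a b x p := by
    intro p
    obtain ⟨x, hx, hmax⟩ := hScomp.exists_isMaxOn hSne (ucont p)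
    exact ⟨x, hx, fun y hy => hmax hy⟩
  set h : (Fin d → ℝ) → ℝ := fun p => sSup ((fun x => uu d Mt a b x p) '' S) with hh
  have himne : ∀ p : Fin d → ℝ, ((fun x => uu d Mt a b x p) '' S).Nonempty :=
    fun p => hSne.image _
  have hbdd : ∀ p : Fin d → ℝ, BddAbove ((fun x => uu d Mt a b x p) '' S) := by
    intro p
    obtain ⟨x, hx, hmax⟩ := hargmax p
    exact ⟨uu d Mt a b x p, by rintro _ ⟨y, hy, rfl⟩; exact hmax y hy⟩
  have hval : ∀ p : Fin d → ℝ, ∀ x ∈ S, (∀ y ∈ S, uu d Mt a b y p ≤ uu d Mt a b x p) →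
      h p = uu d Mt a b x p := by
    intro p x hx hmax
    exact IsGreatest.csSup_eq ⟨⟨x, hx, rfl⟩, by rintro _ ⟨y, hy, rfl⟩; exact hmax y hy⟩
  set C := (a + b/ε) * d with hC
  have hCpos : 0 < C := by
    apply mul_pos _ hdr
    have : 0 < b/ε := div_pos hb hε
    linarith
  have habs : ∀ p q : Fin d → ℝ, ∑ j, |p j - q j| ≤ d * dist p q := by
    intro p q
    calc ∑ j, |p j - q j| ≤ ∑ _j : Fin d, dist p q := by
          apply Finset.sum_le_sum; intro j _
          rw [← Real.dist_eq]; exact dist_le_pi_dist p q j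
      _ = d * dist p q := by
          simp [Finset.sum_const, Finset.card_univ, nsmul_eq_mul]
  have hub : ∀ p ∈ S, ∀ q ∈ S, ∀ x ∈ S, uu d Mt a b x p ≤ uu d Mt a b x q + C * dist p q := by
    intro p hp q hq x hx
    have t1s : ∑ i, x i * Mt.mulVec p i - ∑ i, x i * Mt.mulVec q i
        = ∑ i, x i * Mt.mulVec (p - q) i := by
      rw [← Finset.sum_sub_distrib]
      apply Finset.sum_congr rfl; intro i _
      rw [Matrix.mulVec_sub]; simp [Pi.sub_apply]; ring
    have t1b : ∑ i, x i * Mt.mulVec (p - q) i ≤ d * dist p q := by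
      have hper : ∀ i, x i * Mt.mulVec (p - q) i ≤ x i * (d * dist p q) := by
        intro i
        apply mul_le_mul_of_nonneg_left _ (le_trans hε.le ((hSmem x hx).1 i))
        calc Mt.mulVec (p - q) i ≤ |Mt.mulVec (p - q) i| := le_abs_self _
          _ ≤ ∑ j, |(p - q) j| := mulVec_abs_le Mt hbound _ i
          _ = ∑ j, |p j - q j| := by simp [Pi.sub_apply]
          _ ≤ d * dist p q := habs p q
      calc ∑ i, x i * Mt.mulVec (p - q) i ≤ ∑ i, x i * (d * dist p q) :=
            Finset.sum_le_sum fun i _ => hper i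
        _ = (∑ i, x i) * (d * dist p q) := by rw [← Finset.sum_mul]
        _ = d * dist p q := by rw [(hSmem x hx).2, one_mul]
    have t2 : ∑ i, Real.log (q i) - ∑ i, Real.log (p i) ≤ (d * dist p q) / ε := by
      calc ∑ i, Real.log (q i) - ∑ i, Real.log (p i)
          = ∑ i, (Real.log (q i) - Real.log (p i)) := by rw [Finset.sum_sub_distrib]
        _ ≤ ∑ i, |q i - p i| / ε := by
            apply Finset.sum_le_sum; intro i _
            calc Real.log (q i) - Real.log (p i) ≤ |Real.log (q i) - Real.log (p i)| :=
                  le_abs_self _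
              _ ≤ |q i - p i| / ε := log_lipschitz hε ((hSmem q hq).1 i) ((hSmem p hp).1 i)
        _ = (∑ i, |q i - p i|) / ε := by rw [Finset.sum_div]
        _ ≤ (d * dist q p) / ε := by gcongr; exact habs q p
        _ = (d * dist p q) / ε := by rw [dist_comm]
    have expand : uu d Mt a b x p - uu d Mt a b x q
        = a * (∑ i, x i * Mt.mulVec p i - ∑ i, x i * Mt.mulVec q i)
          + b * (∑ i, Real.log (q i) - ∑ i, Real.log (p i)) := by
      rw [uu, uu]; ring
    have hd1 : ∑ i, x i * Mt.mulVec p i - ∑ i, x i * Mt.mulVec q i ≤ d * dist p q := by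
      rw [t1s]; exact t1b
    have e1 : a * (∑ i, x i * Mt.mulVec p i - ∑ i, x i * Mt.mulVec q i)
        ≤ a * (d * dist p q) := mul_le_mul_of_nonneg_left hd1 ha.le
    have e2 : b * (∑ i, Real.log (q i) - ∑ i, Real.log (p i))
        ≤ b * ((d * dist p q) / ε) := mul_le_mul_of_nonneg_left t2 hb.le
    have e3 : a * (d * dist p q) + b * ((d * dist p q) / ε) = C * dist p q := by
      rw [hC]; field_simp
    linarith [expand, e1, e2, e3]
  have hhb : ∀ p ∈ S, ∀ q ∈ S, h p ≤ h q + C * dist p q := by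
    intro p hp q hq
    apply csSup_le (himne p)
    rintro _ ⟨x, hx, rfl⟩
    have h1 : uu d Mt a b x q ≤ h q := le_csSup (hbdd q) ⟨x, hx, rfl⟩
    have h2 := hub p hp q hq x hx
    linarith
  have hcont : ContinuousOn h S := by
    rw [Metric.continuousOn_iff]
    intro p hp δ hδ
    refine ⟨δ / (C + 1), by positivity, ?_⟩
    intro q hq hdq
    rw [Real.dist_eq]
    have hb1 := hhb p hp q hq
    have hb2 := hhb q hq p hp
    rw [dist_comm q p] at hb2 hdq
    have habs2 : |h q - h p| ≤ C * dist p q := by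
      rw [abs_sub_le_iff]; constructor <;> linarith
    calc |h q - h p| ≤ C * dist p q := habs2
      _ ≤ C * (δ / (C + 1)) := mul_le_mul_of_nonneg_left hdq.le hCpos.le
      _ < δ := by
          rw [mul_div_assoc'] at *
          rw [div_lt_iff₀ (by linarith : (0:ℝ) < C + 1)]
          nlinarith
  obtain ⟨p, hpS, hpmin⟩ := hScomp.exists_isMinOn hSne hcont
  obtain ⟨xs, hxsS, hxsmax⟩ := hargmax p
  set v := uu d Mt a b xs p with hv
  have hhp : h p = v := hval p xs hxsS hxsmax
  have upp : uu d Mt a b p p = 0 := by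
    rw [uu, skew_quad Mt hskew]; ring
  have hv0 : 0 ≤ v := by
    have := hxsmax p hpS
    rw [upp] at this; exact this
  have hSub : ∀ x ∈ S, ∀ i, 0 < x i := fun x hx i => lt_of_lt_of_le hε ((hSmem x hx).1 i)
  have hveq : v = a * ∑ i, xs i * Mt.mulVec p i + b * ∑ i, Real.log (xs i)
      - b * ∑ i, Real.log (p i) := by rw [hv, uu]
  have sc : ∀ x ∈ S, uu d Mt a b x p + (b/4) * ∑ i, (x i - xs i)^2 ≤ v := by
    intro x hx
    set m := fun i => (x i + xs i) / 2 with hm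
    have hmS : m ∈ S := by
      constructor
      · intro i
        have h1 := (hSmem x hx).1 i
        have h2 := (hSmem xs hxsS).1 i
        simp only [hm]; linarith
      · have hsum : ∑ i, m i = (∑ i, x i + ∑ i, xs i) / 2 := by
          have hper : ∀ i : Fin d, m i = x i / 2 + xs i / 2 := fun i => by
            simp only [hm]; ring
          rw [Finset.sum_congr rfl fun i _ => hper i, Finset.sum_add_distrib,
            ← Finset.sum_div, ← Finset.sum_div]
          ring
        rw [hsum, (hSmem x hx).2, (hSmem xs hxsS).2]; norm_num
    have hum : uu d Mt a b m p ≤ v := hxsmax m hmS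
    have e1 : ∑ i, m i * Mt.mulVec p i
        = (∑ i, x i * Mt.mulVec p i) / 2 + (∑ i, xs i * Mt.mulVec p i) / 2 := by
      have hper : ∀ i : Fin d, m i * Mt.mulVec p i
          = x i * Mt.mulVec p i / 2 + xs i * Mt.mulVec p i / 2 := fun i => by
        simp only [hm]; ring
      rw [Finset.sum_congr rfl fun i _ => hper i, Finset.sum_add_distrib,
        ← Finset.sum_div, ← Finset.sum_div]
    have e2 : (∑ i, Real.log (x i)) / 2 + (∑ i, Real.log (xs i)) / 2
        + (∑ i, (x i - xs i)^2) / 8 ≤ ∑ i, Real.log (m i) := by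
      have key := Finset.sum_le_sum (s := Finset.univ)
        (f := fun i => Real.log (x i) / 2 + Real.log (xs i) / 2 + (x i - xs i)^2 / 8)
        (g := fun i => Real.log (m i))
        (fun i _ => log_midpoint (hSub x hx i) (SE_le_one hε.le hx i)
          (hSub xs hxsS i) (SE_le_one hε.le hxsS i))
      calc (∑ i, Real.log (x i)) / 2 + (∑ i, Real.log (xs i)) / 2
          + (∑ i, (x i - xs i)^2) / 8
          = ∑ i, (Real.log (x i) / 2 + Real.log (xs i) / 2 + (x i - xs i)^2 / 8) := by
            rw [Finset.sum_add_distrib, Finset.sum_add_distrib, Finset.sum_div,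
              Finset.sum_div, Finset.sum_div]
        _ ≤ ∑ i, Real.log (m i) := key
    have e2b : b * ((∑ i, Real.log (x i)) / 2 + (∑ i, Real.log (xs i)) / 2
        + (∑ i, (x i - xs i)^2) / 8) ≤ b * ∑ i, Real.log (m i) :=
      mul_le_mul_of_nonneg_left e2 hb.le
    have e1a : a * ∑ i, m i * Mt.mulVec p i
        = a * ((∑ i, x i * Mt.mulVec p i) / 2 + (∑ i, xs i * Mt.mulVec p i) / 2) := by
      rw [e1]
    rw [uu] at hum
    rw [uu]
    rw [hveq] at hum ⊢
    linarith [e2b, e1a, hum]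
  have key : ∀ t : ℝ, 0 < t → t ≤ 1 → v ≤ 4*a^2*d*t/b := by
    intro t ht0 ht1
    set pt := fun i => p i + t * (xs i - p i) with hpt
    have hpt2 : pt = p + t • (xs - p) := by
      funext i; simp [hpt, smul_eq_mul]
    have hmv : ∀ i, Mt.mulVec pt i = Mt.mulVec p i + t * (Mt.mulVec xs i - Mt.mulVec p i) := by
      intro i
      rw [hpt2, Matrix.mulVec_add, Matrix.mulVec_smul, Matrix.mulVec_sub]
      simp [smul_eq_mul]
    have hptS : pt ∈ S := by
      constructor
      · intro i
        have h1 := (hSmem p hpS).1 i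
        have h2 := (hSmem xs hxsS).1 i
        simp only [hpt]
        nlinarith [mul_nonneg ht0.le (show (0:ℝ) ≤ xs i - ε by linarith)]
      · have hsum : ∑ i, pt i = ∑ i, p i + t * (∑ i, xs i - ∑ i, p i) := by
          simp only [hpt]
          rw [Finset.sum_add_distrib, ← Finset.mul_sum, Finset.sum_sub_distrib]
        rw [hsum, (hSmem p hpS).2, (hSmem xs hxsS).2]; ring
    have hbody : ∀ x ∈ S, uu d Mt a b x pt ≤ v - t*v + d*(4*a^2*t^2/b) := by
      intro x hx
      have eb : ∑ i, x i * Mt.mulVec pt i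
          = ∑ i, x i * Mt.mulVec p i
            + t * (∑ i, x i * Mt.mulVec xs i - ∑ i, x i * Mt.mulVec p i) := by
        have hper : ∀ i : Fin d, x i * Mt.mulVec pt i
            = x i * Mt.mulVec p i + (t * (x i * Mt.mulVec xs i) - t * (x i * Mt.mulVec p i)) :=
          fun i => by rw [hmv i]; ring
        rw [Finset.sum_congr rfl fun i _ => hper i, Finset.sum_add_distrib,
          Finset.sum_sub_distrib, ← Finset.mul_sum, ← Finset.mul_sum]
        ring
      have elogs : (1-t) * ∑ i, Real.log (p i) + t * ∑ i, Real.log (xs i)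
          ≤ ∑ i, Real.log (pt i) := by
        have key2 := Finset.sum_le_sum (s := Finset.univ)
          (f := fun i => (1-t) * Real.log (p i) + t * Real.log (xs i))
          (g := fun i => Real.log (pt i))
          (fun i _ => by
            show (1-t) * Real.log (p i) + t * Real.log (xs i) ≤ Real.log (pt i)
            have hpti : pt i = (1-t) * p i + t * xs i := by simp only [hpt]; ring
            rw [hpti]
            exact log_concave_aux (hSub p hpS i) (hSub xs hxsS i) ht0.le ht1)
        calc (1-t) * ∑ i, Real.log (p i) + t * ∑ i, Real.log (xs i)
            = ∑ i, ((1-t) * Real.log (p i) + t * Real.log (xs i)) := by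
              rw [Finset.sum_add_distrib, ← Finset.mul_sum, ← Finset.mul_sum]
              
          _ ≤ ∑ i, Real.log (pt i) := key2
      have hscx := sc x hx
      have hMxs : ∀ i, |Mt.mulVec xs i| ≤ 1 :=
        mulVec_bound Mt hbound (fun i => le_trans hε.le ((hSmem xs hxsS).1 i)) (hSmem xs hxsS).2
      have hMp : ∀ i, |Mt.mulVec p i| ≤ 1 :=
        mulVec_bound Mt hbound (fun i => le_trans hε.le ((hSmem p hpS).1 i)) (hSmem p hpS).2
      have hquadxs : ∑ i, xs i * Mt.mulVec xs i = 0 := skew_quad Mt hskew xs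
      -- phi bound
      have hdiff : ∑ i, x i * Mt.mulVec xs i - ∑ i, xs i * Mt.mulVec xs i
          - ∑ i, x i * Mt.mulVec p i + ∑ i, xs i * Mt.mulVec p i
          ≤ 2 * ∑ i, |x i - xs i| := by
        have step : ∀ i, (x i - xs i) * (Mt.mulVec xs i - Mt.mulVec p i)
            ≤ 2 * |x i - xs i| := by
          intro i
          calc (x i - xs i) * (Mt.mulVec xs i - Mt.mulVec p i)
              ≤ |(x i - xs i) * (Mt.mulVec xs i - Mt.mulVec p i)| := le_abs_self _
            _ = |x i - xs i| * |Mt.mulVec xs i - Mt.mulVec p i| := abs_mul _ _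
            _ ≤ |x i - xs i| * 2 := by
                apply mul_le_mul_of_nonneg_left _ (abs_nonneg _)
                calc |Mt.mulVec xs i - Mt.mulVec p i| ≤ |Mt.mulVec xs i| + |Mt.mulVec p i| :=
                      abs_sub _ _
                  _ ≤ 2 := by linarith [hMxs i, hMp i]
            _ = 2 * |x i - xs i| := by ring
        calc ∑ i, x i * Mt.mulVec xs i - ∑ i, xs i * Mt.mulVec xs i
            - ∑ i, x i * Mt.mulVec p i + ∑ i, xs i * Mt.mulVec p i
            = ∑ i, (x i - xs i) * (Mt.mulVec xs i - Mt.mulVec p i) := by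
              have hper : ∀ i : Fin d, (x i - xs i) * (Mt.mulVec xs i - Mt.mulVec p i)
                  = x i * Mt.mulVec xs i - xs i * Mt.mulVec xs i
                    - (x i * Mt.mulVec p i - xs i * Mt.mulVec p i) := fun i => by ring
              rw [Finset.sum_congr rfl fun i _ => hper i, Finset.sum_sub_distrib,
                Finset.sum_sub_distrib, Finset.sum_sub_distrib]
              ring
          _ ≤ ∑ i, 2 * |x i - xs i| := Finset.sum_le_sum fun i _ => step i
          _ = 2 * ∑ i, |x i - xs i| := by rw [Finset.mul_sum]
      -- per-coordinate quadratic bound summed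
      have hquadb : 2*a*t * ∑ i, |x i - xs i|
          ≤ (b/4) * ∑ i, (x i - xs i)^2 + d * (4*a^2*t^2/b) := by
        have per : ∀ i : Fin d, 2*a*t * |x i - xs i| - (b/4) * (x i - xs i)^2
            ≤ 4*a^2*t^2/b := by
          intro i
          have hinv : b * (4*a^2*t^2/b) = 4*a^2*t^2 := by field_simp
          nlinarith [sq_nonneg (b * |x i - xs i| - 4*a*t), sq_abs (x i - xs i), hb, hinv,
            mul_pos hb hb]
        have sum1 : ∑ i, (2*a*t * |x i - xs i| - (b/4) * (x i - xs i)^2)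
            ≤ ∑ _i : Fin d, (4*a^2*t^2/b) := Finset.sum_le_sum fun i _ => per i
        have sum2 : ∑ _i : Fin d, (4*a^2*t^2/b : ℝ) = d * (4*a^2*t^2/b) := by
          simp [Finset.sum_const, Finset.card_univ, nsmul_eq_mul]
        have sum3 : ∑ i, (2*a*t * |x i - xs i| - (b/4) * (x i - xs i)^2)
            = 2*a*t * ∑ i, |x i - xs i| - (b/4) * ∑ i, (x i - xs i)^2 := by
          rw [Finset.sum_sub_distrib, ← Finset.mul_sum, ← Finset.mul_sum]
        linarith [sum1, sum2.le, sum3]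
      -- assemble
      have m2 : b * ((1-t) * ∑ i, Real.log (p i) + t * ∑ i, Real.log (xs i))
          ≤ b * ∑ i, Real.log (pt i) := mul_le_mul_of_nonneg_left elogs hb.le
      have m3 : a * t * (∑ i, x i * Mt.mulVec xs i - ∑ i, xs i * Mt.mulVec xs i
          - ∑ i, x i * Mt.mulVec p i + ∑ i, xs i * Mt.mulVec p i)
          ≤ a * t * (2 * ∑ i, |x i - xs i|) :=
        mul_le_mul_of_nonneg_left hdiff (by positivity)
      have meb : a * ∑ i, x i * Mt.mulVec pt i
          = a * (∑ i, x i * Mt.mulVec p i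
            + t * (∑ i, x i * Mt.mulVec xs i - ∑ i, x i * Mt.mulVec p i)) := by rw [eb]
      rw [uu] at hscx ⊢
      rw [hveq] at hscx ⊢
      rw [hquadxs] at m3
      nlinarith [m2, m3, meb, hquadb, hscx]
    have hle1 : h pt ≤ v - t*v + d*(4*a^2*t^2/b) := by
      apply csSup_le (himne pt)
      rintro _ ⟨x, hx, rfl⟩
      exact hbody x hx
    have hle2 : v ≤ h pt := by
      rw [← hhp]; exact hpmin hptS
    have htv : t * v ≤ d*(4*a^2*t^2/b) := by linarith
    have : t * v ≤ t * (4*a^2*d*t/b) := by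
      calc t * v ≤ d*(4*a^2*t^2/b) := htv
        _ = t * (4*a^2*d*t/b) := by ring
    exact le_of_mul_le_mul_left this ht0
  have hvle : v ≤ 0 := by
    by_contra hpos
    push_neg at hpos
    set t0 := min 1 (v*b/(8*a^2*d)) with ht0def
    have ht0pos : 0 < t0 := by
      apply lt_min one_pos
      positivity
    have ht01 : t0 ≤ 1 := min_le_left _ _
    have hk := key t0 ht0pos ht01
    have hb2 : 4*a^2*d*t0/b ≤ 4*a^2*d*(v*b/(8*a^2*d))/b := by
      gcongr
      exact min_le_right _ _
    have he : 4*a^2*d*(v*b/(8*a^2*d))/b = v/2 := by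
      field_simp [ha.ne', hb.ne', hdr.ne']
      ring
    rw [he] at hb2
    linarith
  have hvz : v = 0 := le_antisymm hvle hv0
  exact ⟨p, hpS, fun x hx => by
    have := hxsmax x hx
    rw [hvz] at this  -- careful: hxsmax : uu x p ≤ uu xs p = v
    exact this⟩

set_option maxHeartbeats 1000000 in
lemma exists_zero_mid (d : ℕ) (hd : 1 ≤ d) (Mt : Matrix (Fin d) (Fin d) ℝ)
    (hskew : ∀ i j, Mt j i = - Mt i j) (hbound : ∀ i j, |Mt i j| ≤ 1)
    (r : ℝ) (hr0 : 0 < r) (hr1 : r < 1) :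
    ∃ p ∈ unitSimplex d, ∀ i, fvec d Mt r p i = 0 := by
  have hdr : (0:ℝ) < d := by exact_mod_cast Nat.lt_of_lt_of_le Nat.zero_lt_one hd
  set a : ℝ := 2 * (1 - r) with hadef
  set b : ℝ := r / d with hbdef
  have ha : 0 < a := by rw [hadef]; linarith
  have hb : 0 < b := div_pos hr0 hdr
  set A0 : ℝ := (a + b * d * Real.log (2*d)) / b with hA0def
  set τ : ℝ := Real.exp (-A0) with hτdef
  have hτ : 0 < τ := Real.exp_pos _
  set ε : ℝ := min (τ/2) (1/(2*(d:ℝ))) with hεdef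
  have hε : 0 < ε := lt_min (by linarith) (by positivity)
  have hεd : ε ≤ 1/(2*(d:ℝ)) := min_le_right _ _
  have hετ : ε < τ := lt_of_le_of_lt (min_le_left _ _) (by linarith)
  obtain ⟨p, hpS, hmax⟩ := exists_symmetric_max d hd Mt hskew hbound a b ε ha hb hε hεd
  have hp0 : ∀ i, 0 ≤ p i := fun i => le_trans hε.le (hpS.1 i)
  have hp1 : ∑ i, p i = 1 := hpS.2
  have hppos : ∀ i, 0 < p i := fun i => lt_of_lt_of_le hε (hpS.1 i)
  have hMp : ∀ i, |Mt.mulVec p i| ≤ 1 := mulVec_bound Mt hbound hp0 hp1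
  -- Step E : all coordinates are at least τ
  have hintτ : ∀ i, τ ≤ p i := by
    intro i0
    by_contra hlt
    push_neg at hlt
    set y : Fin d → ℝ := fun i => p i / 2 + 1/(2*(d:ℝ)) with hydef
    have hyge : ∀ i, 1/(2*(d:ℝ)) ≤ y i := by
      intro i; simp only [hydef]
      have := hp0 i; linarith
    have hyS : y ∈ SE d ε := by
      constructor
      · intro i; exact le_trans hεd (hyge i)
      · have : ∑ i, y i = (∑ i, p i) / 2 + ∑ _i : Fin d, 1/(2*(d:ℝ)) := by
          simp only [hydef]
          rw [Finset.sum_add_distrib, ← Finset.sum_div]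
        rw [this, hp1]
        simp only [Finset.sum_const, Finset.card_univ, Fintype.card_fin, nsmul_eq_mul]
        field_simp
        ring
      -- sum = 1
    have hu : uu d Mt a b y p ≤ 0 := hmax y hyS
    -- lower bounds
    have hα : -1 ≤ ∑ i, y i * Mt.mulVec p i := by
      have per : ∀ i : Fin d, -(y i) ≤ y i * Mt.mulVec p i := by
        intro i
        have h1 : -1 ≤ Mt.mulVec p i := by have := hMp i; rw [abs_le] at this; linarith [this.1]
        have h2 : 0 ≤ y i := le_trans (by positivity) (hyge i)
        nlinarith
      have hsy : ∑ i, y i = 1 := hyS.2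
      have := Finset.sum_le_sum (s := Finset.univ) (f := fun i => -(y i))
        (g := fun i => y i * Mt.mulVec p i) (fun i _ => per i)
      rw [Finset.sum_neg_distrib, hsy] at this
      exact this
    have hβ : (d : ℝ) * Real.log (1/(2*(d:ℝ))) ≤ ∑ i, Real.log (y i) := by
      have per : ∀ i : Fin d, Real.log (1/(2*(d:ℝ))) ≤ Real.log (y i) := by
        intro i
        exact Real.log_le_log (by positivity) (hyge i)
      have := Finset.sum_le_sum (s := Finset.univ)
        (f := fun _ => Real.log (1/(2*(d:ℝ)))) (g := fun i => Real.log (y i))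
        (fun i _ => per i)
      simpa [Finset.sum_const, Finset.card_univ, Fintype.card_fin, nsmul_eq_mul] using this
    have hγ : ∑ i, Real.log (p i) ≤ Real.log (p i0) := by
      have herase : ∑ i ∈ Finset.univ.erase i0, Real.log (p i) + Real.log (p i0)
          = ∑ i, Real.log (p i) := Finset.sum_erase_add _ _ (Finset.mem_univ i0)
      have hnonpos : ∑ i ∈ Finset.univ.erase i0, Real.log (p i) ≤ 0 :=
        Finset.sum_nonpos fun i _ => Real.log_nonpos (hp0 i) (SE_le_one hε.le hpS i)
      linarith
    have hlog0 : Real.log (p i0) < -A0 := by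
      have := Real.log_lt_log (hppos i0) hlt
      rwa [hτdef, Real.log_exp] at this
    have hbA0 : b * A0 = a + b * d * Real.log (2*d) := by
      rw [hA0def]; field_simp
    have hlog1d : Real.log (1/(2*(d:ℝ))) = - Real.log (2*d) := by
      rw [one_div, Real.log_inv]
    -- combine
    have e1 : a * (-1) ≤ a * ∑ i, y i * Mt.mulVec p i := mul_le_mul_of_nonneg_left hα ha.le
    have e2 : b * ((d:ℝ) * Real.log (1/(2*(d:ℝ)))) ≤ b * ∑ i, Real.log (y i) :=
      mul_le_mul_of_nonneg_left hβ hb.le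
    have e3 : b * ∑ i, Real.log (p i) ≤ b * Real.log (p i0) :=
      mul_le_mul_of_nonneg_left hγ hb.le
    have e4 : b * Real.log (p i0) < b * (-A0) := by
      exact (mul_lt_mul_iff_right₀ hb).2 hlog0
    rw [uu] at hu
    rw [hlog1d] at e2
    nlinarith [e1, e2, e3, e4, hbA0, hu]
  -- Step F : stationarity
  set δ : ℝ := τ - ε with hδdef
  have hδ : 0 < δ := by rw [hδdef]; linarith
  have hstat : ∀ i j : Fin d, i ≠ j →
      a * Mt.mulVec p i + b / p i = a * Mt.mulVec p j + b / p j := by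
    intro i j hij
    set vv : Fin d → ℝ := fun k => (if k = i then (1:ℝ) else 0) - (if k = j then (1:ℝ) else 0)
      with hvvdef
    have hvvsum : ∑ k, vv k = 0 := by
      simp [hvvdef, Finset.sum_sub_distrib]
    have hvvabs : ∀ k, vv k = 1 ∨ vv k = -1 ∨ vv k = 0 := by
      intro k
      simp only [hvvdef]
      rcases eq_or_ne k i with h1 | h1 <;> rcases eq_or_ne k j with h2 | h2 <;>
        simp [h1, h2] <;> tauto
    have hmemb : ∀ t : ℝ, |t| < δ → (fun k => p k + t * vv k) ∈ SE d ε := by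
      intro t ht
      constructor
      · intro k
        show ε ≤ p k + t * vv k
        have hτk := hintτ k
        rcases hvvabs k with h | h | h <;> rw [h]
        · rw [abs_lt] at ht; simp only [hδdef] at ht; linarith
        · rw [abs_lt] at ht; simp only [hδdef] at ht; linarith
        · have := hpS.1 k; linarith
      · show ∑ k, (p k + t * vv k) = 1
        rw [Finset.sum_add_distrib, ← Finset.mul_sum, hvvsum, hp1]; ring
    set g : ℝ → ℝ := fun t => uu d Mt a b (fun k => p k + t * vv k) p with hgdef
    have hg0 : g 0 = 0 := by
      have : (fun k => p k + 0 * vv k) = p := by funext k; ring_nf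
      simp only [hgdef, this]
      rw [uu, skew_quad Mt hskew]; ring
    have hloc : IsLocalMax g 0 := by
      have hmem : Set.Ioo (-δ) δ ∈ nhds (0:ℝ) := Ioo_mem_nhds (by linarith) hδ
      filter_upwards [hmem] with t ht
      rw [hg0]
      apply hmax
      apply hmemb
      rw [abs_lt]; exact ⟨ht.1, ht.2⟩
    have hder : HasDerivAt g
        (a * ∑ k, vv k * Mt.mulVec p k + b * ∑ k, vv k / p k) 0 := by
      have h1 : ∀ k : Fin d, HasDerivAt (fun t : ℝ => p k + t * vv k) (vv k) 0 := by
        intro k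
        simpa using (hasDerivAt_mul_const (vv k)).const_add (p k)
      have h2 : HasDerivAt (fun t : ℝ => ∑ k, (p k + t * vv k) * Mt.mulVec p k)
          (∑ k, vv k * Mt.mulVec p k) 0 :=
        HasDerivAt.fun_sum fun k _ => (h1 k).mul_const (Mt.mulVec p k)
      have h3 : HasDerivAt (fun t : ℝ => ∑ k, Real.log (p k + t * vv k))
          (∑ k, vv k / p k) 0 := by
        apply HasDerivAt.fun_sum
        intro k _
        have := ((h1 k).log (by simpa using (hppos k).ne'))
        simpa using this
      have h4 := ((h2.const_mul a).add (h3.const_mul b)).sub_const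
        (b * ∑ i, Real.log (p i))
      exact h4
    have hD0 : a * ∑ k, vv k * Mt.mulVec p k + b * ∑ k, vv k / p k = 0 :=
      hloc.hasDerivAt_eq_zero hder
    have hs1 : ∑ k, vv k * Mt.mulVec p k = Mt.mulVec p i - Mt.mulVec p j := by
      simp only [hvvdef, sub_mul, ite_mul, one_mul, zero_mul]
      rw [Finset.sum_sub_distrib]
      simp [Finset.sum_ite_eq']
    have hs2 : ∑ k, vv k / p k = 1 / p i - 1 / p j := by
      have per : ∀ k : Fin d, vv k / p k
          = (if k = i then 1 / p i else 0) - (if k = j then 1 / p j else 0) := by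
        intro k
        simp only [hvvdef]
        rcases eq_or_ne k i with h1 | h1 <;> rcases eq_or_ne k j with h2 | h2
        · exact absurd (h1 ▸ h2 : i = j) hij
        · subst h1; simp [sub_div, h2]
        · subst h2; simp [sub_div, h1, neg_div]
        · simp [h1, h2]
      rw [Finset.sum_congr rfl fun k _ => per k, Finset.sum_sub_distrib]
      simp [Finset.sum_ite_eq']
    rw [hs1, hs2] at hD0
    have hbi : b / p i = b * (1 / p i) := by ring
    have hbj : b / p j = b * (1 / p j) := by ring
    rw [hbi, hbj]
    nlinarith [hD0]
  -- all lambda_i equal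
  have hd0 : 0 < d := hd
  set i0 : Fin d := ⟨0, hd0⟩ with hi0
  set lam : ℝ := a * Mt.mulVec p i0 + b / p i0 with hlam
  have heq : ∀ i, a * Mt.mulVec p i + b / p i = lam := by
    intro i
    rcases eq_or_ne i i0 with h | h
    · rw [h]
    · exact hstat i i0 h
  -- sum identity gives lam = r
  have hlamr : lam = r := by
    have hsum1 : ∑ i, p i * (a * Mt.mulVec p i + b / p i) = lam := by
      have : ∀ i : Fin d, p i * (a * Mt.mulVec p i + b / p i) = p i * lam := by
        intro i; rw [heq i]
      rw [Finset.sum_congr rfl fun i _ => this i, ← Finset.sum_mul, hp1, one_mul]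
    have hsum2 : ∑ i, p i * (a * Mt.mulVec p i + b / p i) = r := by
      have per : ∀ i : Fin d, p i * (a * Mt.mulVec p i + b / p i)
          = a * (p i * Mt.mulVec p i) + b := by
        intro i
        have : p i * (b / p i) = b := by
          rw [mul_comm, div_mul_cancel₀ b (hppos i).ne']
        nlinarith [this]
      rw [Finset.sum_congr rfl fun i _ => per i, Finset.sum_add_distrib, ← Finset.mul_sum,
        skew_quad Mt hskew]
      simp only [Finset.sum_const, Finset.card_univ, Fintype.card_fin, nsmul_eq_mul]
      rw [hbdef]
      field_simp
      ring
    rw [← hsum1, hsum2]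
  refine ⟨p, ⟨hp0, hp1⟩, ?_⟩
  intro i
  have hi := heq i
  rw [hlamr] at hi
  have hpi := (hppos i).ne'
  have hmul : p i * (a * Mt.mulVec p i + b / p i) = p i * r := by rw [hi]
  have hexp : p i * (b / p i) = b := by rw [mul_comm, div_mul_cancel₀ b hpi]
  rw [fvec]
  rw [hadef] at hmul
  have hbval : b = r * (1/(d:ℝ)) := by rw [hbdef]; ring
  nlinarith [hmul, hexp, hbval]

lemma exists_zero_r0 (d : ℕ) (hd : 1 ≤ d) (Mt : Matrix (Fin d) (Fin d) ℝ)
    (hskew : ∀ i j, Mt j i = - Mt i j) :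
    ∃ p ∈ unitSimplex d, ∀ i, fvec d Mt 0 p i = 0 := by
  have hd0 : 0 < d := hd
  set i0 : Fin d := ⟨0, hd0⟩ with hi0
  set p : Fin d → ℝ := fun k => if k = i0 then 1 else 0 with hp
  have hdiag : Mt i0 i0 = 0 := by
    have := hskew i0 i0; linarith
  refine ⟨p, ⟨?_, ?_⟩, ?_⟩
  · intro i; simp only [hp]; split_ifs <;> norm_num
  · simp [hp]
  · have hmv : Mt.mulVec p i0 = 0 := by
      have h1 : Mt.mulVec p i0 = ∑ j, Mt i0 j * p j := by
        simp [Matrix.mulVec, dotProduct]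
      rw [h1]
      have h2 : ∀ j : Fin d, Mt i0 j * p j = if j = i0 then Mt i0 i0 else 0 := by
        intro j
        simp only [hp]
        split_ifs with hj
        · subst hj; ring
        · ring
      rw [Finset.sum_congr rfl fun j _ => h2 j]
      simp [hdiag]
    intro i
    rcases eq_or_ne i i0 with h | h
    · subst h
      rw [fvec, hmv]
      ring
    · have hpi : p i = 0 := by simp [hp, h]
      rw [fvec, hpi]
      ring

lemma exists_zero_r1 (d : ℕ) (hd : 1 ≤ d) (Mt : Matrix (Fin d) (Fin d) ℝ) :
    ∃ p ∈ unitSimplex d, ∀ i, fvec d Mt 1 p i = 0 := by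
  have hdr : (0:ℝ) < d := by exact_mod_cast Nat.lt_of_lt_of_le Nat.zero_lt_one hd
  refine ⟨fun _ => 1/(d:ℝ), ⟨fun i => by positivity, ?_⟩, ?_⟩
  · simp only [Finset.sum_const, Finset.card_univ, Fintype.card_fin, nsmul_eq_mul]
    rw [one_div]
    exact mul_inv_cancel₀ hdr.ne'
  · intro i
    rw [fvec]
    ring

lemma exists_zero_all (d : ℕ) (hd : 1 ≤ d) (Mt : Matrix (Fin d) (Fin d) ℝ)
    (hskew : ∀ i j, Mt j i = - Mt i j) (hbound : ∀ i j, |Mt i j| ≤ 1)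
    (r : ℝ) (hr0 : 0 ≤ r) (hr1 : r ≤ 1) :
    ∃ p ∈ unitSimplex d, ∀ i, fvec d Mt r p i = 0 := by
  rcases eq_or_lt_of_le hr0 with h0 | h0
  · rw [← h0]; exact exists_zero_r0 d hd Mt hskew
  rcases eq_or_lt_of_le hr1 with h1 | h1
  · rw [h1]; exact exists_zero_r1 d hd Mt
  exact exists_zero_mid d hd Mt hskew hbound r h0 h1

theorem stmt0 (d : ℕ) (hd : 1 ≤ d) (Mt : Matrix (Fin d) (Fin d) ℝ)
    (hskew : ∀ i j, Mt j i = - Mt i j) (hbound : ∀ i j, |Mt i j| ≤ 1)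
    (r : ℝ) (hr0 : 0 ≤ r) (hr1 : r ≤ 1) :
    ContinuousOn (fun p => p + (2 : ℝ)⁻¹ • fvec d Mt r p) (unitSimplex d) ∧
    (∀ p ∈ unitSimplex d, ∑ i, fvec d Mt r p i = 0) ∧
    (∀ p ∈ unitSimplex d, ∀ i, 0 ≤ p i + (2 : ℝ)⁻¹ * fvec d Mt r p i) ∧
    (∀ p ∈ unitSimplex d, p + (2 : ℝ)⁻¹ • fvec d Mt r p ∈ unitSimplex d) ∧
    (∃ p ∈ unitSimplex d, p + (2 : ℝ)⁻¹ • fvec d Mt r p = p) ∧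
    (∃ p ∈ unitSimplex d, fvec d Mt r p = 0) := by
  have hdr : (0:ℝ) < d := by exact_mod_cast Nat.lt_of_lt_of_le Nat.zero_lt_one hd
  -- continuity
  have hfc : Continuous (fvec d Mt r) := by
    apply continuous_pi
    intro i
    have hmv : Continuous (fun p : Fin d → ℝ => Mt.mulVec p i) := by
      have : (fun p : Fin d → ℝ => Mt.mulVec p i) = fun p => ∑ j, Mt i j * p j := by
        funext p; simp [Matrix.mulVec, dotProduct]
      rw [this]
      exact continuous_finset_sum _ fun j _ => continuous_const.mul (continuous_apply j)
    exact ((continuous_const.mul (continuous_apply i)).mul hmv).add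
      (continuous_const.mul (continuous_const.sub (continuous_apply i)))
  have hgc : Continuous (fun p => p + (2 : ℝ)⁻¹ • fvec d Mt r p) :=
    continuous_id.add (hfc.const_smul (2 : ℝ)⁻¹ :)
  -- sum of the vector field is zero
  have hsum : ∀ p ∈ unitSimplex d, ∑ i, fvec d Mt r p i = 0 := by
    intro p hp
    have per : ∀ i : Fin d, fvec d Mt r p i
        = 2 * (1 - r) * (p i * Mt.mulVec p i) + (r * (1/(d:ℝ)) - r * p i) := by
      intro i; rw [fvec]; ring
    rw [Finset.sum_congr rfl fun i _ => per i, Finset.sum_add_distrib, ← Finset.mul_sum,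
      skew_quad Mt hskew, Finset.sum_sub_distrib, ← Finset.mul_sum, ← Finset.mul_sum,
      hp.2, Finset.sum_const, Finset.card_univ, Fintype.card_fin, nsmul_eq_mul]
    field_simp
    ring
  -- nonnegativity of coordinates of g
  have hnn : ∀ p ∈ unitSimplex d, ∀ i, 0 ≤ p i + (2 : ℝ)⁻¹ * fvec d Mt r p i := by
    intro p hp i
    have hM : -1 ≤ Mt.mulVec p i := by
      have := mulVec_bound Mt hbound hp.1 hp.2 i
      rw [abs_le] at this; linarith [this.1]
    have hpi := hp.1 i
    have hfact : 0 ≤ (1 - r) * p i * (Mt.mulVec p i + 1) := by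
      apply mul_nonneg (mul_nonneg (by linarith) hpi) (by linarith)
    have hrd : 0 ≤ r * (1/(d:ℝ)) := by positivity
    have hrp : 0 ≤ r * p i := mul_nonneg hr0 hpi
    rw [fvec]
    nlinarith [hfact, hrd, hrp]
  -- g maps the simplex to itself
  have hmapsto : ∀ p ∈ unitSimplex d, p + (2 : ℝ)⁻¹ • fvec d Mt r p ∈ unitSimplex d := by
    intro p hp
    constructor
    · intro i
      have := hnn p hp i
      simpa [Pi.add_apply, Pi.smul_apply, smul_eq_mul] using this
    · have : ∑ i, (p + (2 : ℝ)⁻¹ • fvec d Mt r p) i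
          = ∑ i, p i + (2:ℝ)⁻¹ * ∑ i, fvec d Mt r p i := by
        simp only [Pi.add_apply, Pi.smul_apply, smul_eq_mul]
        rw [Finset.sum_add_distrib, ← Finset.mul_sum]
      rw [this, hp.2, hsum p hp]
      ring
  obtain ⟨p0, hp0S, hp0z⟩ := exists_zero_all d hd Mt hskew hbound r hr0 hr1
  have hp0zf : fvec d Mt r p0 = 0 := funext fun i => hp0z i
  refine ⟨hgc.continuousOn, hsum, hnn, hmapsto, ⟨p0, hp0S, ?_⟩, ⟨p0, hp0S, hp0zf⟩⟩
  rw [hp0zf]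
  simp
end

section
/- For every δ > 0 there exists r₀ > 0 such that for all r with 0 < r ≤ r₀, the unique zero p^{(r)} ∈ Δ of f^{(r)} lies in B_δ(ML), i.e., there is a maximal lottery q with |p^{(r)} − q| < δ. -/
open Finset

/-- The set of maximal lotteries for the majority-margin matrix `M̃`:
lotteries `p` with `(M̃p)_i ≤ 0` for all `i`. -/
def maxLotteries (d : ℕ) (Mt : Matrix (Fin d) (Fin d) ℝ) : Set (Fin d → ℝ) :=
  {p | p ∈ unitSimplex d ∧ ∀ i, Mt.mulVec p i ≤ 0}

lemma closed_simplex (d : ℕ) : IsClosed (unitSimplex d) := by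
  have h1 : IsClosed {x : Fin d → ℝ | ∀ i, 0 ≤ x i} := by
    have : {x : Fin d → ℝ | ∀ i, 0 ≤ x i} = ⋂ i, {x | 0 ≤ x i} := by
      ext x; simp
    rw [this]
    exact isClosed_iInter fun i => isClosed_le continuous_const (continuous_apply i)
  have h2 : IsClosed {x : Fin d → ℝ | ∑ i, x i = 1} :=
    isClosed_eq (continuous_finset_sum _ fun i _ => continuous_apply i) continuous_const
  have : unitSimplex d = {x : Fin d → ℝ | ∀ i, 0 ≤ x i} ∩ {x | ∑ i, x i = 1} := rfl
  rw [this]; exact h1.inter h2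

lemma compact_simplex (d : ℕ) : IsCompact (unitSimplex d) := by
  have hsub : unitSimplex d ⊆ Set.pi Set.univ (fun _ : Fin d => Set.Icc (0:ℝ) 1) := by
    intro x hx i _
    refine ⟨hx.1 i, ?_⟩
    calc x i ≤ ∑ j, x j := Finset.single_le_sum (fun j _ => hx.1 j) (mem_univ i)
    _ = 1 := hx.2
  exact IsCompact.of_isClosed_subset (isCompact_univ_pi fun _ => isCompact_Icc)
    (closed_simplex d) hsub

lemma cont_mulVec (d : ℕ) (Mt : Matrix (Fin d) (Fin d) ℝ) (i : Fin d) :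
    Continuous fun p : Fin d → ℝ => Mt.mulVec p i := by
  simp only [Matrix.mulVec, dotProduct]
  exact continuous_finset_sum _ fun j _ => (continuous_const.mul (continuous_apply j))

lemma cont_l1dist {d : ℕ} (q : Fin d → ℝ) : Continuous fun p : Fin d → ℝ => l1dist p q := by
  unfold l1dist
  exact continuous_finset_sum _ fun j _ => ((continuous_apply j).sub continuous_const).abs

lemma lemA (d : ℕ) (Mt : Matrix (Fin d) (Fin d) ℝ) (δ : ℝ) (hδ : 0 < δ) :
    ∃ ε > 0, ∀ p ∈ unitSimplex d, (∀ i, Mt.mulVec p i ≤ ε) →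
      ∃ q ∈ maxLotteries d Mt, l1dist p q < δ := by
  by_contra h
  push_neg at h
  have hseq : ∀ n : ℕ, ∃ p ∈ unitSimplex d, (∀ i, Mt.mulVec p i ≤ 1/(n+1)) ∧
      ∀ q ∈ maxLotteries d Mt, δ ≤ l1dist p q := by
    intro n
    obtain ⟨p, hp, h1, h2⟩ := h (1/(n+1)) (by positivity)
    exact ⟨p, hp, h1, h2⟩
  choose u hu h1 h2 using hseq
  obtain ⟨p, hpS, φ, hφ, hlim⟩ := (compact_simplex d).tendsto_subseq hu
  have hpML : p ∈ maxLotteries d Mt := by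
    refine ⟨hpS, fun i => ?_⟩
    have hc : Filter.Tendsto (fun n => Mt.mulVec (u (φ n)) i) Filter.atTop
        (nhds (Mt.mulVec p i)) := ((cont_mulVec d Mt i).tendsto p).comp hlim
    have h0 : Filter.Tendsto (fun n : ℕ => 1/((n:ℝ)+1)) Filter.atTop (nhds 0) :=
      tendsto_one_div_add_atTop_nhds_zero_nat
    refine le_of_tendsto_of_tendsto' hc h0 fun n => ?_
    calc Mt.mulVec (u (φ n)) i ≤ 1/((φ n : ℝ)+1) := h1 (φ n) i
    _ ≤ 1/((n:ℝ)+1) := by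
        apply one_div_le_one_div_of_le (by positivity)
        have h3 : (n:ℝ) ≤ (φ n : ℝ) := Nat.cast_le.2 (hφ.id_le n)
        linarith
  have hdist : Filter.Tendsto (fun n => l1dist (u (φ n)) p) Filter.atTop (nhds 0) := by
    have := ((cont_l1dist p).tendsto p).comp hlim
    simpa [l1dist, Function.comp_def] using this
  have : δ ≤ 0 := ge_of_tendsto hdist (Filter.Eventually.of_forall fun n => h2 (φ n) p hpML)
  linarith

theorem stmt2 (d : ℕ) (hd : 1 ≤ d) (Mt : Matrix (Fin d) (Fin d) ℝ)
    (hskew : ∀ i j, Mt j i = - Mt i j) (hbound : ∀ i j, |Mt i j| ≤ 1)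
    (hML : (maxLotteries d Mt).Nonempty)
    (δ : ℝ) (hδ : 0 < δ) :
    ∃ r₀ > 0, ∀ r : ℝ, 0 < r → r ≤ r₀ → r ≤ 1 →
      ∀ p ∈ unitSimplex d, fvec d Mt r p = 0 →
        ∃ q ∈ maxLotteries d Mt, l1dist p q < δ := by
  obtain ⟨ε, hε, hA⟩ := lemA d Mt δ hδ
  refine ⟨min ε (1/2), by positivity, ?_⟩
  intro r hr hrmin hr1 p hp hzero
  have hrε : r ≤ ε := hrmin.trans (min_le_left _ _)
  have hr2 : r ≤ 1/2 := hrmin.trans (min_le_right _ _)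
  have hdpos : (0:ℝ) < 1/(d:ℝ) := by
    have : (1:ℝ) ≤ (d:ℝ) := by exact_mod_cast hd
    positivity
  apply hA p hp
  intro i
  have heq : 2 * (1 - r) * p i * Mt.mulVec p i + r * (1 / (d : ℝ) - p i) = 0 :=
    congrFun hzero i
  have hpi : 0 < p i := by
    rcases lt_or_eq_of_le (hp.1 i) with h | h
    · exact h
    · rw [← h] at heq; nlinarith
  by_contra hgt
  push_neg at hgt
  nlinarith [mul_lt_mul_of_pos_left hgt hpi, mul_le_mul_of_nonneg_left hrε hpi.le,
    mul_pos hpi (hε.trans hgt)]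
end

section
/- For every r ∈ [0,1] and every p₀ ∈ Δ, the initial value problem dy/dt(t) = f^{(r)}(y(t)), y(0) = p₀, has a unique continuously differentiable solution y : [0,∞) → ℝ^d, and this solution satisfies y(t) ∈ Δ for all t ≥ 0. -/
open Finset Set

section Stmt3Aux
namespace Stmt3
variable {d : ℕ}


variable {d : ℕ}

lemma hasDerivWithinAt_apply {g : ℝ → Fin d → ℝ} {v : Fin d → ℝ} {s : Set ℝ} {t : ℝ}
    (h : HasDerivWithinAt g v s t) (i : Fin d) :
    HasDerivWithinAt (fun τ => g τ i) (v i) s t := by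
  have := (ContinuousLinearMap.proj (R := ℝ) (φ := fun _ : Fin d => ℝ)
    i).hasFDerivAt.comp_hasDerivWithinAt t h
  exact hasDerivWithinAt_pi.1 h i

lemma sum_fvec (hd : 1 ≤ d) (Mt : Matrix (Fin d) (Fin d) ℝ)
    (hskew : ∀ i j, Mt j i = - Mt i j) (r : ℝ) (p : Fin d → ℝ) :
    ∑ i, fvec d Mt r p i = r * (1 - ∑ i, p i) := by
  have hd0 : (d : ℝ) ≠ 0 := Nat.cast_ne_zero.mpr (by omega)
  have hq : ∑ i, p i * Mt.mulVec p i = 0 := by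
    have h1 : ∑ i, p i * Mt.mulVec p i = ∑ i, ∑ j, p i * (Mt i j * p j) := by
      simp [Matrix.mulVec, dotProduct, Finset.mul_sum]
    have h2 : ∑ i : Fin d, ∑ j : Fin d, p i * (Mt i j * p j)
        = - ∑ i : Fin d, ∑ j : Fin d, p i * (Mt i j * p j) := by
      nth_rewrite 1 [Finset.sum_comm]
      have : ∀ i j : Fin d, p j * (Mt j i * p i) = -(p i * (Mt i j * p j)) := by
        intro i j; rw [hskew]; ring
      calc ∑ j : Fin d, ∑ i : Fin d, p i * (Mt i j * p j)
          = ∑ i : Fin d, ∑ j : Fin d, -(p i * (Mt i j * p j)) := by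
            apply Finset.sum_congr rfl; intro i _
            apply Finset.sum_congr rfl; intro j _
            exact this i j
        _ = - ∑ i : Fin d, ∑ j : Fin d, p i * (Mt i j * p j) := by
            simp
    rw [h1]; linarith [h2]
  have e1 : ∑ i, fvec d Mt r p i
      = 2*(1-r) * (∑ i, p i * Mt.mulVec p i) + r * ∑ i : Fin d, (1/(d:ℝ) - p i) := by
    simp only [fvec]
    rw [Finset.sum_add_distrib, Finset.mul_sum, Finset.mul_sum]
    congr 1
    apply Finset.sum_congr rfl; intro i _; ring
  have e2 : ∑ i : Fin d, (1/(d:ℝ) - p i) = 1 - ∑ i, p i := by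
    rw [Finset.sum_sub_distrib, Finset.sum_const, Finset.card_univ, Fintype.card_fin,
      nsmul_eq_mul, mul_one_div, div_self hd0]
  rw [e1, hq, e2]; ring

lemma continuous_mulVec_apply (Mt : Matrix (Fin d) (Fin d) ℝ) (i : Fin d) :
    Continuous fun p : Fin d → ℝ => Mt.mulVec p i := by
  simp only [Matrix.mulVec, dotProduct]
  exact continuous_finset_sum _ fun j _ => continuous_const.mul (continuous_apply j)

lemma abs_mulVec_le (Mt : Matrix (Fin d) (Fin d) ℝ) (hbound : ∀ i j, |Mt i j| ≤ 1)
    {p : Fin d → ℝ} {R : ℝ} (hp : ∀ j, |p j| ≤ R) (i : Fin d) :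
    |Mt.mulVec p i| ≤ d * R := by
  calc |Mt.mulVec p i| = |∑ j, Mt i j * p j| := by simp [Matrix.mulVec, dotProduct]
    _ ≤ ∑ j, |Mt i j * p j| := Finset.abs_sum_le_sum_abs _ _
    _ ≤ ∑ _j : Fin d, 1 * R := Finset.sum_le_sum fun j _ => by
        rw [abs_mul]; exact mul_le_mul (hbound i j) (hp j) (abs_nonneg _) zero_le_one
    _ = d * R := by simp [Finset.sum_const, Finset.card_univ, nsmul_eq_mul]


lemma lipschitzOnWith_fvec (Mt : Matrix (Fin d) (Fin d) ℝ) (hbound : ∀ i j, |Mt i j| ≤ 1)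
    (r : ℝ) (hr0 : 0 ≤ r) (hr1 : r ≤ 1) (R : ℝ) (hR : 0 ≤ R) :
    LipschitzOnWith (Real.toNNReal (4*d*R + 1)) (fvec d Mt r) (Metric.closedBall 0 R) := by
  have hd0 : (0:ℝ) ≤ d := Nat.cast_nonneg d
  apply LipschitzOnWith.of_dist_le_mul
  intro p hp q hq
  rw [Real.coe_toNNReal _ (by positivity)]
  have hD : (0:ℝ) ≤ dist p q := dist_nonneg
  rw [dist_pi_le_iff (by positivity)]
  intro i
  have hpj : ∀ j, |p j| ≤ R := fun j => by
    have h1 : ‖p j‖ ≤ ‖p‖ := norm_le_pi_norm p j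
    have h2 : ‖p‖ ≤ R := by simpa using mem_closedBall_iff_norm.mp hp
    simpa [Real.norm_eq_abs] using h1.trans h2
  have hqj : ∀ j, |q j| ≤ R := fun j => by
    have h1 : ‖q j‖ ≤ ‖q‖ := norm_le_pi_norm q j
    have h2 : ‖q‖ ≤ R := by simpa using mem_closedBall_iff_norm.mp hq
    simpa [Real.norm_eq_abs] using h1.trans h2
  have hsub : ∀ j, |p j - q j| ≤ dist p q := fun j => by
    have := dist_le_pi_dist p q j
    simpa [Real.dist_eq] using this
  have hM1 : |Mt.mulVec q i| ≤ d * R := abs_mulVec_le Mt hbound hqj i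
  have hM2 : |Mt.mulVec p i - Mt.mulVec q i| ≤ d * dist p q := by
    have he : Mt.mulVec p i - Mt.mulVec q i = Mt.mulVec (p - q) i := by
      rw [Matrix.mulVec_sub]; rfl
    rw [he]
    exact abs_mulVec_le Mt hbound (fun j => by simpa using hsub j) i
  have h1r : |1 - r| ≤ 1 := by rw [abs_of_nonneg (by linarith)]; linarith
  have habs : |p i * Mt.mulVec p i - q i * Mt.mulVec q i|
      ≤ R * (d * dist p q) + dist p q * (d * R) := by
    have he : p i * Mt.mulVec p i - q i * Mt.mulVec q i
        = p i * (Mt.mulVec p i - Mt.mulVec q i) + (p i - q i) * Mt.mulVec q i := by ring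
    rw [he]
    calc |p i * (Mt.mulVec p i - Mt.mulVec q i) + (p i - q i) * Mt.mulVec q i|
        ≤ |p i * (Mt.mulVec p i - Mt.mulVec q i)| + |(p i - q i) * Mt.mulVec q i| := abs_add_le _ _
      _ = |p i| * |Mt.mulVec p i - Mt.mulVec q i| + |p i - q i| * |Mt.mulVec q i| := by
          rw [abs_mul, abs_mul]
      _ ≤ R * (d * dist p q) + dist p q * (d * R) := by
          gcongr <;> [exact hpj i; exact hsub i]
  calc dist (fvec d Mt r p i) (fvec d Mt r q i)
      = |2*(1-r) * (p i * Mt.mulVec p i - q i * Mt.mulVec q i) + r * (q i - p i)| := by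
        rw [Real.dist_eq]; congr 1; simp only [fvec]; ring
    _ ≤ 2*|1-r| * |p i * Mt.mulVec p i - q i * Mt.mulVec q i| + r * |p i - q i| := by
        calc |2*(1-r) * (p i * Mt.mulVec p i - q i * Mt.mulVec q i) + r * (q i - p i)|
            ≤ |2*(1-r) * (p i * Mt.mulVec p i - q i * Mt.mulVec q i)| + |r * (q i - p i)| :=
              abs_add_le _ _
          _ = 2*|1-r| * |p i * Mt.mulVec p i - q i * Mt.mulVec q i| + r * |p i - q i| := by
              rw [abs_mul, abs_mul, abs_mul, abs_two, abs_of_nonneg hr0, abs_sub_comm (q i) (p i)]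
    _ ≤ (4*d*R + 1) * dist p q := by
        nlinarith [abs_nonneg (p i * Mt.mulVec p i - q i * Mt.mulVec q i), hsub i,
          abs_nonneg (p i - q i), abs_nonneg (1 - r), habs, h1r]

lemma norm_fvec_le (hd : 1 ≤ d) (Mt : Matrix (Fin d) (Fin d) ℝ) (hbound : ∀ i j, |Mt i j| ≤ 1)
    (r : ℝ) (hr0 : 0 ≤ r) (hr1 : r ≤ 1) {p : Fin d → ℝ}
    (hp : p ∈ Metric.closedBall (0 : Fin d → ℝ) 2) :
    ‖fvec d Mt r p‖ ≤ 8*d + 3 := by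
  have hd0 : (0:ℝ) < d := by exact_mod_cast Nat.pos_of_ne_zero (by omega)
  rw [pi_norm_le_iff_of_nonneg (by positivity)]
  intro i
  have hpj : ∀ j, |p j| ≤ 2 := fun j => by
    have h1 : ‖p j‖ ≤ ‖p‖ := norm_le_pi_norm p j
    have h2 : ‖p‖ ≤ 2 := by simpa using mem_closedBall_iff_norm.mp hp
    simpa [Real.norm_eq_abs] using h1.trans h2
  have hM : |Mt.mulVec p i| ≤ d * 2 := abs_mulVec_le Mt hbound hpj i
  have hdinv : 1/(d:ℝ) ≤ 1 := by
    rw [div_le_one hd0]; exact_mod_cast hd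
  rw [Real.norm_eq_abs]
  have h1r : |1 - r| ≤ 1 := by rw [abs_of_nonneg (by linarith)]; linarith
  calc |fvec d Mt r p i|
      ≤ |2*(1-r) * p i * Mt.mulVec p i| + |r * (1/(d:ℝ) - p i)| := abs_add_le _ _
    _ = 2*|1-r| * |p i| * |Mt.mulVec p i| + r * |1/(d:ℝ) - p i| := by
        rw [abs_mul, abs_mul, abs_mul, abs_mul, abs_two, abs_of_nonneg hr0]
    _ ≤ 8*d + 3 := by
        have h3 : |1/(d:ℝ) - p i| ≤ 1/(d:ℝ) + |p i| := by
          rw [sub_eq_add_neg]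
          exact (abs_add_le _ _).trans (by rw [abs_neg, abs_of_nonneg (by positivity)])
        have h4 : |p i| * |Mt.mulVec p i| ≤ 2 * ((d:ℝ)*2) :=
          mul_le_mul (hpj i) hM (abs_nonneg _) (by norm_num)
        have h5 : 2*|1-r| * |p i| * |Mt.mulVec p i| ≤ 8 * (d:ℝ) := by
          nlinarith [h4, abs_nonneg (p i), abs_nonneg (Mt.mulVec p i), h1r, abs_nonneg (1-r),
            mul_nonneg (abs_nonneg (p i)) (abs_nonneg (Mt.mulVec p i))]
        have h6 : r * |1/(d:ℝ) - p i| ≤ 3 := by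
          nlinarith [h3, hdinv, hpj i, hr0, hr1, abs_nonneg (1/(d:ℝ) - p i)]
        linarith
lemma invariant (hd : 1 ≤ d) (Mt : Matrix (Fin d) (Fin d) ℝ)
    (hskew : ∀ i j, Mt j i = - Mt i j)
    (r : ℝ) (hr0 : 0 ≤ r) (hr1 : r ≤ 1) {a b : ℝ} (hab : a ≤ b)
    (g : ℝ → Fin d → ℝ)
    (hg : ∀ t ∈ Icc a b, HasDerivWithinAt g (fvec d Mt r (g t)) (Icc a b) t)
    (hga : g a ∈ unitSimplex d) :
    ∀ t ∈ Icc a b, g t ∈ unitSimplex d := by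
  have hgc : ContinuousOn g (Icc a b) := fun t ht => (hg t ht).continuousWithinAt
  have hg' : ∀ t ∈ Ico a b, HasDerivWithinAt g (fvec d Mt r (g t)) (Ici t) t := fun t ht =>
    (hg t ⟨ht.1, ht.2.le⟩).mono_of_mem_nhdsWithin
      (Filter.mem_of_superset (Icc_mem_nhdsGE_of_mem ⟨le_rfl, ht.2⟩) (Icc_subset_Icc_left ht.1))
  -- sum stays 1
  have hsum : ∀ t ∈ Icc a b, ∑ i, g t i = 1 := by
    have hS : ∀ t ∈ Ico a b, HasDerivWithinAt (fun τ => ∑ i, g τ i)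
        (r * (1 - ∑ i, g t i)) (Ici t) t := by
      intro t ht
      have h1 : HasDerivWithinAt (fun τ => ∑ i, g τ i) (∑ i, fvec d Mt r (g t) i) (Ici t) t :=
        HasDerivWithinAt.fun_sum fun i _ => hasDerivWithinAt_apply (hg' t ht) i
      rwa [sum_fvec hd Mt hskew r (g t)] at h1
    have hlip : ∀ _t : ℝ, LipschitzWith ⟨r, hr0⟩ (fun x : ℝ => r * (1 - x)) := by
      intro _t
      apply LipschitzWith.of_dist_le_mul
      intro x y
      have he : r*(1-x) - r*(1-y) = -(r*(x-y)) := by ring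
      rw [Real.dist_eq, Real.dist_eq, he, abs_neg, abs_mul, abs_of_nonneg hr0]
      exact le_rfl
    have hSc : ContinuousOn (fun τ => ∑ i, g τ i) (Icc a b) :=
      continuousOn_finset_sum _ fun i _ => (continuous_apply i).comp_continuousOn hgc
    have := ODE_solution_unique (v := fun _ x => r * (1 - x)) (K := ⟨r, hr0⟩)
      (f := fun τ => ∑ i, g τ i) (g := fun _ => (1:ℝ)) (a := a) (b := b) hlip
      hSc hS continuousOn_const
      (fun t _ht => by
        simpa using (hasDerivWithinAt_const t (Ici t) (1:ℝ)))
      (by simpa using hga.2)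
    intro t ht
    simpa using this ht
  -- coordinates stay nonnegative
  have hnonneg : ∀ t ∈ Icc a b, ∀ i, 0 ≤ g t i := by
    intro t ht i
    set pr : ℝ → ℝ := fun τ => max a (min τ b) with hpr
    have hprm : ∀ τ, pr τ ∈ Icc a b := fun τ =>
      ⟨le_max_left _ _, max_le hab (min_le_right _ _)⟩
    have hpr_id : ∀ τ ∈ Icc a b, pr τ = τ := fun τ hτ => by
      simp only [hpr]; rw [min_eq_left hτ.2, max_eq_right hτ.1]
    set ce : ℝ → ℝ := fun τ => 2*(1-r) * Mt.mulVec (g (pr τ)) i - r with hce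
    have hcec : Continuous ce := by
      have h1 : Continuous pr := continuous_const.max (continuous_id.min continuous_const)
      have h2 : Continuous fun τ => g (pr τ) := hgc.comp_continuous h1 hprm
      exact (continuous_const.mul ((continuous_mulVec_apply Mt i).comp h2)).sub continuous_const
    set A : ℝ → ℝ := fun τ => ∫ s in a..τ, ce s with hA
    have hA' : ∀ τ : ℝ, HasDerivAt A (ce τ) τ := fun τ =>
      intervalIntegral.integral_hasDerivAt_right (hcec.intervalIntegrable _ _)
        (hcec.stronglyMeasurableAtFilter _ _) hcec.continuousAt
    set u : ℝ → ℝ := fun τ => Real.exp (-A τ) * g τ i with hu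
    have hu' : ∀ τ ∈ Icc a b,
        HasDerivWithinAt u (Real.exp (-A τ) * (r * (1/(d:ℝ)))) (Icc a b) τ := by
      intro τ hτ
      have he : HasDerivWithinAt (fun s => Real.exp (-A s))
          (Real.exp (-A τ) * (-ce τ)) (Icc a b) τ :=
        (((hA' τ).neg).exp).hasDerivWithinAt
      have hgi := hasDerivWithinAt_apply (hg τ hτ) i
      have hmul := he.mul hgi
      have hval : Real.exp (-A τ) * (-ce τ) * g τ i
          + Real.exp (-A τ) * fvec d Mt r (g τ) i
          = Real.exp (-A τ) * (r * (1/(d:ℝ))) := by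
        have hceτ : ce τ = 2*(1-r) * Mt.mulVec (g τ) i - r := by
          simp only [hce]; rw [hpr_id τ hτ]
        rw [hceτ]; simp only [fvec]; ring
      rw [hval] at hmul
      exact hmul
    have humono : MonotoneOn u (Icc a b) := by
      apply monotoneOn_of_deriv_nonneg (convex_Icc a b)
      · exact fun τ hτ => (hu' τ hτ).continuousWithinAt
      · intro x hx
        rw [interior_Icc] at hx
        exact (((hu' x ⟨hx.1.le, hx.2.le⟩).hasDerivAt
          (Icc_mem_nhds hx.1 hx.2)).differentiableAt).differentiableWithinAt
      · intro x hx
        rw [interior_Icc] at hx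
        rw [((hu' x ⟨hx.1.le, hx.2.le⟩).hasDerivAt (Icc_mem_nhds hx.1 hx.2)).deriv]
        have hd0 : (0:ℝ) ≤ 1/(d:ℝ) := by positivity
        positivity
    have hAa : A a = 0 := by simp [hA]
    have hua : u a = g a i := by simp [hu, hAa]
    have h0 : (0:ℝ) ≤ u a := hua ▸ hga.1 i
    have h1 : u a ≤ u t := humono ⟨le_rfl, hab⟩ ht ht.1
    have h2 : (0:ℝ) < Real.exp (-A t) := Real.exp_pos _
    have h3 : 0 ≤ Real.exp (-A t) * g t i := by
      have : (0:ℝ) ≤ u t := h0.trans h1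
      simpa [hu] using this
    exact nonneg_of_mul_nonneg_right h3 h2
  exact fun t ht => ⟨hnonneg t ht, hsum t ht⟩
lemma norm_le_one_of_mem (hd : 1 ≤ d) {x : Fin d → ℝ} (hx : x ∈ unitSimplex d) : ‖x‖ ≤ 1 := by
  rw [pi_norm_le_iff_of_nonneg zero_le_one]
  intro i
  rw [Real.norm_eq_abs, abs_of_nonneg (hx.1 i)]
  calc x i ≤ ∑ j, x j := Finset.single_le_sum (fun j _ => hx.1 j) (Finset.mem_univ i)
    _ = 1 := hx.2

lemma step (hd : 1 ≤ d) (Mt : Matrix (Fin d) (Fin d) ℝ)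
    (hskew : ∀ i j, Mt j i = - Mt i j) (hbound : ∀ i j, |Mt i j| ≤ 1)
    (r : ℝ) (hr0 : 0 ≤ r) (hr1 : r ≤ 1) :
    ∀ (t₀ : ℝ) (x₀ : Fin d → ℝ), x₀ ∈ unitSimplex d →
    ∃ g : ℝ → Fin d → ℝ, g t₀ = x₀ ∧
      (∀ t ∈ Icc t₀ (t₀ + (8*(d:ℝ)+3)⁻¹),
        HasDerivWithinAt g (fvec d Mt r (g t)) (Icc t₀ (t₀ + (8*(d:ℝ)+3)⁻¹)) t) ∧
      (∀ t ∈ Icc t₀ (t₀ + (8*(d:ℝ)+3)⁻¹), g t ∈ unitSimplex d) := by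
  intro t₀ x₀ hx₀
  have hC : (0:ℝ) < 8*d+3 := by positivity
  have hε : (0:ℝ) < (8*(d:ℝ)+3)⁻¹ := by positivity
  have hx₀n : ‖x₀‖ ≤ 1 := norm_le_one_of_mem hd hx₀
  have hsub : Metric.closedBall x₀ 1 ⊆ Metric.closedBall (0 : Fin d → ℝ) 2 := by
    apply Metric.closedBall_subset_closedBall'
    rw [dist_zero_right]
    linarith
  have hpl : IsPicardLindelof (fun _ => fvec d Mt r) (tmin := t₀) (tmax := t₀ + (8*(d:ℝ)+3)⁻¹)
      ⟨t₀, le_rfl, le_add_of_nonneg_right hε.le⟩ x₀ 1 0 (8*d+3) (Real.toNNReal (4*d*2 + 1)) :=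
    { lipschitzOnWith := fun t _ =>
        (lipschitzOnWith_fvec Mt hbound r hr0 hr1 2 (by norm_num)).mono (by simpa using hsub)
      continuousOn := fun x _ => continuousOn_const
      norm_le := fun t _ x hx => by
        push_cast
        exact norm_fvec_le hd Mt hbound r hr0 hr1 (hsub (by simpa using hx))
      mul_max_le := by
        show ((8*d+3 : NNReal):ℝ) * max (t₀ + (8*(d:ℝ)+3)⁻¹ - t₀) (t₀ - t₀)
          ≤ ((1:NNReal):ℝ) - ((0:NNReal):ℝ)
        push_cast
        rw [add_sub_cancel_left, sub_self, max_eq_left hε.le, mul_inv_cancel₀ hC.ne']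
        norm_num
    }
  obtain ⟨g, hg0, hg'⟩ := hpl.exists_eq_forall_mem_Icc_hasDerivWithinAt₀
  replace hg0 : g t₀ = x₀ := hg0
  have hmem := invariant hd Mt hskew r hr0 hr1 (le_add_of_nonneg_right hε.le) g hg'
    (hg0 ▸ hx₀)
  exact ⟨g, hg0, hg', hmem⟩
end Stmt3
end Stmt3Aux

/-- For every `r ∈ [0,1]` and initial state `p₀ ∈ Δ`, the initial value problem
`y' = f^{(r)}(y)`, `y(0) = p₀` has a unique C¹ solution on `[0,∞)`, and the solution
stays in the simplex. -/
theorem stmt3 (d : ℕ) (hd : 1 ≤ d) (Mt : Matrix (Fin d) (Fin d) ℝ)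
    (hskew : ∀ i j, Mt j i = - Mt i j) (hbound : ∀ i j, |Mt i j| ≤ 1)
    (r : ℝ) (hr0 : 0 ≤ r) (hr1 : r ≤ 1)
    (p₀ : Fin d → ℝ) (hp₀ : p₀ ∈ unitSimplex d) :
    ∃ y : ℝ → Fin d → ℝ,
      y 0 = p₀ ∧
      (∀ t ∈ Ici (0 : ℝ), HasDerivWithinAt y (fvec d Mt r (y t)) (Ici 0) t) ∧
      (∀ t ∈ Ici (0 : ℝ), y t ∈ unitSimplex d) ∧
      (∀ z : ℝ → Fin d → ℝ, z 0 = p₀ →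
        (∀ t ∈ Ici (0 : ℝ), HasDerivWithinAt z (fvec d Mt r (z t)) (Ici 0) t) →
        ∀ t ∈ Ici (0 : ℝ), z t = y t) := by
  set ε : ℝ := (8*(d:ℝ)+3)⁻¹ with hεdef
  have hε : (0:ℝ) < ε := by positivity
  choose sol hsol0 hsolD hsolM using Stmt3.step hd Mt hskew hbound r hr0 hr1
  -- the sequence of points at times n*ε
  let pt : ℕ → {x : Fin d → ℝ // x ∈ unitSimplex d} := fun n =>
    Nat.rec ⟨p₀, hp₀⟩
      (fun m prev => ⟨sol ((m:ℝ)*ε) prev.1 prev.2 ((m:ℝ)*ε + ε),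
        hsolM ((m:ℝ)*ε) prev.1 prev.2 _ ⟨le_add_of_nonneg_right hε.le, le_rfl⟩⟩) n
  let G : ℕ → ℝ → Fin d → ℝ := fun n => sol ((n:ℝ)*ε) (pt n).1 (pt n).2
  have hG0 : ∀ n : ℕ, G n ((n:ℝ)*ε) = (pt n).1 := fun n => hsol0 _ _ _
  have hGD : ∀ n : ℕ, ∀ t ∈ Icc ((n:ℝ)*ε) ((n:ℝ)*ε + ε),
      HasDerivWithinAt (G n) (fvec d Mt r (G n t)) (Icc ((n:ℝ)*ε) ((n:ℝ)*ε + ε)) t :=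
    fun n => hsolD _ _ _
  have hGM : ∀ n : ℕ, ∀ t ∈ Icc ((n:ℝ)*ε) ((n:ℝ)*ε + ε), G n t ∈ unitSimplex d :=
    fun n => hsolM _ _ _
  have hlink : ∀ n : ℕ, (pt (n+1)).1 = G n ((n:ℝ)*ε + ε) := fun n => rfl
  -- the glued solution
  set y : ℝ → Fin d → ℝ := fun t => G ⌊t / ε⌋₊ t with hydef
  have hagree : ∀ n : ℕ, ∀ t ∈ Icc ((n:ℝ)*ε) ((n:ℝ)*ε + ε), y t = G n t := by
    intro n t ht
    have ht0 : (0:ℝ) ≤ t := le_trans (by positivity) ht.1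
    rcases lt_or_eq_of_le ht.2 with h | h
    · have hfl : ⌊t/ε⌋₊ = n := by
        rw [Nat.floor_eq_iff (by positivity)]
        constructor
        · rw [le_div_iff₀ hε]; exact ht.1
        · rw [div_lt_iff₀ hε]; push_cast; linarith
      simp only [hydef, hfl]
    · have hfl : ⌊t/ε⌋₊ = n + 1 := by
        have heq : t / ε = ((n+1 : ℕ) : ℝ) := by
          rw [h]; push_cast; field_simp
        rw [heq, Nat.floor_natCast]
      have hcast : ((n+1 : ℕ):ℝ) * ε = (n:ℝ)*ε + ε := by push_cast; ring
      calc y t = G (n+1) t := by simp only [hydef, hfl]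
        _ = G (n+1) (((n+1:ℕ) : ℝ) * ε) := by rw [hcast, ← h]
        _ = (pt (n+1)).1 := hG0 (n+1)
        _ = G n ((n:ℝ)*ε + ε) := hlink n
        _ = G n t := by rw [← h]
  have hy0 : y 0 = p₀ := by
    have h0 : (0:ℝ) ∈ Icc (((0:ℕ):ℝ) * ε) (((0:ℕ):ℝ) * ε + ε) := by
      simp [hε.le]
    rw [hagree 0 0 h0]
    have h1 := hG0 0
    simp only [Nat.cast_zero, zero_mul] at h1
    exact h1
  -- membership and derivative data for each t ≥ 0
  have hfloor : ∀ t : ℝ, 0 ≤ t → t ∈ Icc ((⌊t/ε⌋₊:ℝ)*ε) ((⌊t/ε⌋₊:ℝ)*ε + ε) := by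
    intro t ht
    constructor
    · rw [← le_div_iff₀ hε]
      exact Nat.floor_le (by positivity)
    · have := Nat.lt_floor_add_one (t/ε)
      rw [div_lt_iff₀ hε] at this
      push_cast at this ⊢
      linarith
  have hymem : ∀ t ∈ Ici (0:ℝ), y t ∈ unitSimplex d := by
    intro t ht
    rw [hagree ⌊t/ε⌋₊ t (hfloor t ht)]
    exact hGM _ t (hfloor t ht)
  have hyD : ∀ t ∈ Ici (0:ℝ), HasDerivWithinAt y (fvec d Mt r (y t)) (Ici 0) t := by
    intro t ht
    set n := ⌊t/ε⌋₊ with hn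
    have hmem := hfloor t ht
    rw [← hn] at hmem
    have h2 : t < (n:ℝ)*ε + ε := by
      have := Nat.lt_floor_add_one (t/ε)
      rw [div_lt_iff₀ hε] at this
      push_cast at this ⊢
      linarith
    have hbase : HasDerivWithinAt y (fvec d Mt r (y t)) (Icc ((n:ℝ)*ε) ((n:ℝ)*ε + ε)) t := by
      have h := (hGD n t hmem).congr (fun x hx => hagree n x hx) (hagree n t hmem)
      rw [hagree n t hmem]
      exact h
    rcases eq_or_lt_of_le hmem.1 with heq | hlt
    · -- t = n*ε : left endpoint of the n-th interval
      rcases Nat.eq_zero_or_pos n with hn0 | hpos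
      · -- t = 0
        have ht0 : t = 0 := by
          rw [← heq, hn0]; simp
        have hIcc : Icc ((n:ℝ)*ε) ((n:ℝ)*ε + ε) ∈ nhdsWithin t (Ici (0:ℝ)) := by
          have h0 : ((n:ℝ)*ε) = 0 := by rw [hn0]; simp
          rw [ht0, h0]
          exact Icc_mem_nhdsGE (by rw [zero_add]; exact hε)
        exact hbase.mono_of_mem_nhdsWithin hIcc
      · -- junction point
        obtain ⟨m, hnm⟩ : ∃ m : ℕ, n = m + 1 := ⟨n - 1, (Nat.succ_pred_eq_of_pos hpos).symm⟩
        have hcast : (n:ℝ) * ε = (m:ℝ)*ε + ε := by rw [hnm]; push_cast; ring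
        have htm : t = (m:ℝ)*ε + ε := by rw [← heq, hcast]
        have hmem' : t ∈ Icc ((m:ℝ)*ε) ((m:ℝ)*ε + ε) := by
          rw [htm]; exact ⟨le_add_of_nonneg_right hε.le, le_rfl⟩
        have hyGm : y t = G m t := hagree m t hmem'
        have hleft : HasDerivWithinAt y (fvec d Mt r (y t)) (Iic t) t := by
          have h := (hGD m t hmem').congr (fun x hx => hagree m x hx) hyGm
          rw [hyGm]
          refine HasDerivWithinAt.mono_of_mem_nhdsWithin h ?_
          have h2' : Icc ((m:ℝ)*ε) ((m:ℝ)*ε + ε)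
              ∈ nhdsWithin ((m:ℝ)*ε + ε) (Iic ((m:ℝ)*ε + ε)) :=
            Icc_mem_nhdsLE (by linarith)
          rw [htm]
          exact h2'
        have hright : HasDerivWithinAt y (fvec d Mt r (y t)) (Ici t) t := by
          refine HasDerivWithinAt.mono_of_mem_nhdsWithin hbase ?_
          have h2' : Icc ((n:ℝ)*ε) ((n:ℝ)*ε + ε) ∈ nhdsWithin t (Ici t) := by
            rw [← heq]
            exact Icc_mem_nhdsGE (by linarith)
          exact h2'
        exact (hleft.union hright).mono (by rw [Iic_union_Ici]; exact subset_univ _)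
    · -- interior point of the n-th interval
      exact hbase.mono_of_mem_nhdsWithin
        (mem_nhdsWithin_of_mem_nhds (Icc_mem_nhds hlt h2))
  refine ⟨y, hy0, hyD, hymem, ?_⟩
  -- uniqueness
  intro z hz0 hzD T hT
  rw [Set.mem_Ici] at hT
  have hzc : ContinuousOn z (Icc 0 T) := fun s hs =>
    ((hzD s hs.1).continuousWithinAt).mono Icc_subset_Ici_self
  have hyc : ContinuousOn y (Icc 0 T) := fun s hs =>
    ((hyD s hs.1).continuousWithinAt).mono Icc_subset_Ici_self
  obtain ⟨C, hC⟩ := (isCompact_Icc : IsCompact (Icc (0:ℝ) T)).exists_bound_of_continuousOn hzc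
  set R : ℝ := max C 1 with hR
  have hR0 : (0:ℝ) ≤ R := le_trans zero_le_one (le_max_right _ _)
  have hzball : ∀ s ∈ Ico (0:ℝ) T, z s ∈ Metric.closedBall (0 : Fin d → ℝ) R := by
    intro s hs
    rw [Metric.mem_closedBall, dist_zero_right]
    exact le_trans (hC s ⟨hs.1, hs.2.le⟩) (le_max_left _ _)
  have hyball : ∀ s ∈ Ico (0:ℝ) T, y s ∈ Metric.closedBall (0 : Fin d → ℝ) R := by
    intro s hs
    rw [Metric.mem_closedBall, dist_zero_right]
    exact le_trans (Stmt3.norm_le_one_of_mem hd (hymem s hs.1)) (le_max_right _ _)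
  have hz' : ∀ s ∈ Ico (0:ℝ) T, HasDerivWithinAt z (fvec d Mt r (z s)) (Ici s) s :=
    fun s hs => (hzD s hs.1).mono (Ici_subset_Ici.mpr hs.1)
  have hy' : ∀ s ∈ Ico (0:ℝ) T, HasDerivWithinAt y (fvec d Mt r (y s)) (Ici s) s :=
    fun s hs => (hyD s hs.1).mono (Ici_subset_Ici.mpr hs.1)
  have huniq := ODE_solution_unique_of_mem_Icc_right
    (v := fun _ x => fvec d Mt r x) (s := fun _ => Metric.closedBall (0 : Fin d → ℝ) R)
    (K := Real.toNNReal (4*d*R + 1))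
    (fun _t _ => Stmt3.lipschitzOnWith_fvec Mt hbound r hr0 hr1 R hR0)
    hzc hz' hzball hyc hy' hyball (hz0.trans hy0.symm)
  exact huniq ⟨hT, le_rfl⟩
end

section
/- Let r ∈ (0,1]. Then for every initial state p₀ ∈ Δ, every coordinate i ∈ [d], and every t ≥ 1, the solution of the replicator-mutation differential equation satisfies y^{(r)}_i(t,p₀) ≥ r/(4d). -/
open Finset Set

/-- Barrier lemma: if `g a ≥ 0` and `g` has positive derivative wherever it is negative
on `(a, b)`, then `g b ≥ 0`. -/
lemma barrier_lemma (g : ℝ → ℝ) (a b : ℝ) (hab : a ≤ b)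
    (hg : ContinuousOn g (Icc a b)) (hga : 0 ≤ g a)
    (hder : ∀ t ∈ Ioo a b, g t < 0 → ∃ g', HasDerivAt g g' t ∧ 0 < g') :
    0 ≤ g b := by
  by_contra hb
  push_neg at hb
  set S : Set ℝ := Icc a b ∩ g ⁻¹' (Ici 0) with hS
  have hSclosed : IsClosed S := hg.preimage_isClosed_of_isClosed isClosed_Icc isClosed_Ici
  have hSne : S.Nonempty := ⟨a, ⟨le_refl a, hab⟩, hga⟩
  have hSbdd : BddAbove S := ⟨b, fun x hx => hx.1.2⟩
  set s := sSup S with hs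
  have hsS : s ∈ S := hSclosed.csSup_mem hSne hSbdd
  have hsIcc : s ∈ Icc a b := hsS.1
  have hgs : 0 ≤ g s := hsS.2
  have hsb : s < b := by
    rcases lt_or_eq_of_le hsIcc.2 with h | h
    · exact h
    · exact absurd (h ▸ hgs) (not_le.mpr hb)
  have hneg : ∀ t ∈ Ioo s b, g t < 0 := by
    intro t ht
    by_contra hcon
    push_neg at hcon
    have : t ∈ S := ⟨⟨le_trans hsIcc.1 ht.1.le, ht.2.le⟩, hcon⟩
    exact absurd (le_csSup hSbdd this) (not_le.mpr ht.1)
  have hmono : StrictMonoOn g (Icc s b) := by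
    apply strictMonoOn_of_deriv_pos (convex_Icc s b)
    · exact hg.mono (Icc_subset_Icc hsIcc.1 le_rfl)
    · intro x hx
      rw [interior_Icc] at hx
      have hxab : x ∈ Ioo a b := ⟨lt_of_le_of_lt hsIcc.1 hx.1, hx.2⟩
      obtain ⟨g', hg', hg'pos⟩ := hder x hxab (hneg x hx)
      rw [hg'.deriv]; exact hg'pos
  have := hmono ⟨le_rfl, hsb.le⟩ ⟨hsb.le, le_rfl⟩ hsb
  linarith

/-- The vector field estimate: if `p i < r/(4d)` then `fvec … p i > r/(4d)`. -/
lemma fvec_pos (d : ℕ) (hd : 1 ≤ d) (Mt : Matrix (Fin d) (Fin d) ℝ)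
    (hbound : ∀ i j, |Mt i j| ≤ 1) (r : ℝ) (hr0 : 0 < r) (hr1 : r ≤ 1)
    (p : Fin d → ℝ) (hp : p ∈ unitSimplex d) (i : Fin d)
    (hpi : p i < r / (4 * (d : ℝ))) : r / (4 * (d : ℝ)) < fvec d Mt r p i := by
  have hD : (1 : ℝ) ≤ (d : ℝ) := by exact_mod_cast hd
  have hDpos : (0 : ℝ) < (d : ℝ) := by linarith
  have hpnn := hp.1
  have hpsum := hp.2
  -- |Mt.mulVec p i| ≤ 1
  have hM : -1 ≤ Mt.mulVec p i := by
    have h1 : |Mt.mulVec p i| ≤ 1 := by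
      rw [Matrix.mulVec, dotProduct]
      calc |∑ j, Mt i j * p j| ≤ ∑ j, |Mt i j * p j| := Finset.abs_sum_le_sum_abs _ _
        _ ≤ ∑ j, p j := by
            apply Finset.sum_le_sum
            intro j _
            rw [abs_mul, abs_of_nonneg (hpnn j)]
            exact mul_le_of_le_one_left (hpnn j) (hbound i j)
        _ = 1 := hpsum
    linarith [neg_abs_le (Mt.mulVec p i)]
  -- 2(1-r) p_i (Mp)_i ≥ -2 p_i
  have hkey : -2 * p i ≤ 2 * (1 - r) * p i * Mt.mulVec p i := by
    nlinarith [hpnn i, mul_nonneg (hpnn i) (by linarith : (0:ℝ) ≤ 1 - r)]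
  have hfd : r / (d : ℝ) = 4 * (r / (4 * (d : ℝ))) := by
    field_simp
  have : fvec d Mt r p i ≥ r / (d : ℝ) - 3 * p i := by
    simp only [fvec]
    have : r * (1 / (d : ℝ) - p i) = r / (d : ℝ) - r * p i := by ring
    nlinarith [hpnn i]
  have h3 : 3 * p i < 3 * (r / (4 * (d : ℝ))) := by linarith
  linarith [hfd ▸ this]

/-- For `r ∈ (0,1]`, every solution of the replicator-mutation ODE satisfies
`y_i(t) ≥ r/(4d)` for all `t ≥ 1` and every coordinate `i`. -/
theorem stmt5 (d : ℕ) (hd : 1 ≤ d) (Mt : Matrix (Fin d) (Fin d) ℝ)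
    (hskew : ∀ i j, Mt j i = - Mt i j) (hbound : ∀ i j, |Mt i j| ≤ 1)
    (r : ℝ) (hr0 : 0 < r) (hr1 : r ≤ 1)
    (p₀ : Fin d → ℝ) (hp₀ : p₀ ∈ unitSimplex d)
    (y : ℝ → Fin d → ℝ) (hy0 : y 0 = p₀)
    (hyΔ : ∀ t ∈ Ici (0 : ℝ), y t ∈ unitSimplex d)
    (hyD : ∀ t ∈ Ici (0 : ℝ), HasDerivWithinAt y (fvec d Mt r (y t)) (Ici 0) t) :
    ∀ t : ℝ, 1 ≤ t → ∀ i, r / (4 * (d : ℝ)) ≤ y t i := by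
  have hD : (1 : ℝ) ≤ (d : ℝ) := by exact_mod_cast hd
  have hDpos : (0 : ℝ) < (d : ℝ) := by linarith
  set c := r / (4 * (d : ℝ)) with hc
  have hcpos : 0 < c := by positivity
  -- continuity of y on Ici 0
  have hycont : ContinuousOn y (Ici 0) := fun t ht => (hyD t ht).continuousWithinAt
  -- componentwise derivative at interior points
  have hcomp : ∀ t : ℝ, 0 < t → ∀ i,
      HasDerivAt (fun s => y s i) (fvec d Mt r (y t) i) t := by
    intro t ht i
    have h1 : HasDerivAt y (fvec d Mt r (y t)) t :=
      (hyD t (le_of_lt ht)).hasDerivAt (Ici_mem_nhds ht)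
    exact (ContinuousLinearMap.proj (R := ℝ) (φ := fun _ : Fin d => ℝ) i).hasFDerivAt.comp_hasDerivAt t h1
  intro t ht i
  have hyconti : ∀ a b : ℝ, 0 ≤ a → ContinuousOn (fun s => y s i) (Icc a b) := by
    intro a b ha
    exact ((continuous_apply i).comp_continuousOn
      (hycont.mono (fun x hx => le_trans ha hx.1)))
  -- Step 1: y 1 i ≥ c
  have step1 : c ≤ y 1 i := by
    have := barrier_lemma (fun s => y s i - c * s) 0 1 zero_le_one
      (by
        exact ((hyconti 0 1 le_rfl).sub ((continuous_const.mul continuous_id).continuousOn)))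
      (by simp [hy0, hp₀.1 i])
      (by
        intro s hs hneg
        have hsi : y s i < c * s := by simpa [sub_neg] using hneg
        have hsc : y s i < c := lt_of_lt_of_le hsi
          (by nlinarith [hs.2, hcpos])
        refine ⟨fvec d Mt r (y s) i - c, ?_, ?_⟩
        · exact ((hcomp s hs.1 i).sub ((hasDerivAt_id s).const_mul c)).congr_deriv (by ring)
        · have := fvec_pos d hd Mt hbound r hr0 hr1 (y s) (hyΔ s hs.1.le) i hsc
          linarith)
    simpa using this
  -- Step 2: y t i ≥ c for t ≥ 1
  have step2 := barrier_lemma (fun s => y s i - c) 1 t ht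
    ((hyconti 1 t zero_le_one).sub continuousOn_const)
    (by simpa [sub_nonneg] using step1)
    (by
      intro s hs hneg
      have hsc : y s i < c := by simpa [sub_neg] using hneg
      refine ⟨fvec d Mt r (y s) i, ?_, ?_⟩
      · simpa using (hcomp s (by linarith [hs.1]) i).sub_const c
      · have := fvec_pos d hd Mt hbound r hr0 hr1 (y s)
          (hyΔ s (show (0:ℝ) ≤ s by linarith [hs.1])) i hsc
        linarith)
  have h2 : c ≤ y t i := by simpa [sub_nonneg] using step2
  exact h2
end

section
/- Let r ∈ (0,1] and δ > 0, and let p^{(r)} be the unique zero of f^{(r)} in Δ. Then there exists η > 0 such that sup{ |y^{(r)}(t,p) − p^{(r)}| : t ≥ 0, p ∈ Δ with |p − p^{(r)}| < η } < δ; that is, any solution starting within η of p^{(r)} stays within δ of p^{(r)} for all time. -/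
open Finset Set Filter
open Topology

/-- The Lyapunov function: relative entropy of `pr` w.r.t. `p`. -/
noncomputable def Vfun (d : ℕ) (pr : Fin d → ℝ) (p : Fin d → ℝ) : ℝ :=
  ∑ i, pr i * (Real.log (pr i) - Real.log (p i))

lemma key_alg (d : ℕ) (hd : 0 < d) (Mt : Matrix (Fin d) (Fin d) ℝ)
    (hskew : ∀ i j, Mt j i = - Mt i j) (r : ℝ) (hr0 : 0 ≤ r)
    (pr : Fin d → ℝ) (hprpos : ∀ i, 0 < pr i) (hprs : ∑ i, pr i = 1)
    (hprz : ∀ i, fvec d Mt r pr i = 0)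
    (p : Fin d → ℝ) (hppos : ∀ i, 0 < p i) (hps : ∑ i, p i = 1) :
    0 ≤ ∑ i, (pr i / p i) * fvec d Mt r p i := by
  have hdR : (d : ℝ) ≠ 0 := Nat.cast_ne_zero.mpr hd.ne'
  have hfix : ∀ i, 2 * (1 - r) * pr i * Mt.mulVec pr i = r * pr i - r / d := by
    intro i
    have h := hprz i
    simp only [fvec] at h
    linear_combination h
  have hskewsum : ∑ i, pr i * Mt.mulVec p i = - ∑ i, p i * Mt.mulVec pr i := by
    have h1 : ∑ i, pr i * Mt.mulVec p i = ∑ i, ∑ j, pr i * (Mt i j * p j) := by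
      refine Finset.sum_congr rfl fun i _ => ?_
      simp [Matrix.mulVec, dotProduct, Finset.mul_sum]
    have h2 : ∑ i, p i * Mt.mulVec pr i = ∑ i, ∑ j, p i * (Mt i j * pr j) := by
      refine Finset.sum_congr rfl fun i _ => ?_
      simp [Matrix.mulVec, dotProduct, Finset.mul_sum]
    rw [h1, h2, Finset.sum_comm (s := univ) (t := univ)]
    rw [← Finset.sum_neg_distrib]
    refine Finset.sum_congr rfl fun j _ => ?_
    rw [← Finset.sum_neg_distrib]
    refine Finset.sum_congr rfl fun i _ => ?_
    rw [hskew i j]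
    ring
  have step1 : ∑ i, pr i / p i * fvec d Mt r p i
      = (2 * (1 - r)) * (∑ i, pr i * Mt.mulVec p i)
        + ∑ i, (r * (pr i / p i) / d - r * pr i) := by
    rw [Finset.mul_sum, ← Finset.sum_add_distrib]
    refine Finset.sum_congr rfl fun i _ => ?_
    have hpi : p i ≠ 0 := (hppos i).ne'
    simp only [fvec]
    field_simp
  have step2 : (2 * (1 - r)) * (∑ i, pr i * Mt.mulVec p i)
      = ∑ i, (r / d * (p i / pr i) - r * p i) := by
    rw [hskewsum, mul_neg, Finset.mul_sum, ← Finset.sum_neg_distrib]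
    refine Finset.sum_congr rfl fun i _ => ?_
    have hpri : pr i ≠ 0 := (hprpos i).ne'
    have e : 2 * (1 - r) * (p i * Mt.mulVec pr i)
        = p i / pr i * (2 * (1 - r) * pr i * Mt.mulVec pr i) := by
      field_simp
    rw [e, hfix i]
    field_simp
    ring
  rw [step1, step2, ← Finset.sum_add_distrib]
  have step4 : ∀ i, (r / d * (p i / pr i) - r * p i + (r * (pr i / p i) / d - r * pr i))
      = r / d * ((p i - pr i) ^ 2 / (p i * pr i)) + (2 * r / d - r * p i - r * pr i) := by
    intro i
    have hpi : p i ≠ 0 := (hppos i).ne'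
    have hpri : pr i ≠ 0 := (hprpos i).ne'
    field_simp
    ring
  rw [Finset.sum_congr rfl fun i _ => step4 i, Finset.sum_add_distrib]
  have step5 : ∑ i : Fin d, (2 * r / d - r * p i - r * pr i) = 0 := by
    simp only [Finset.sum_sub_distrib, Finset.sum_const, Finset.card_univ, Fintype.card_fin,
      nsmul_eq_mul, ← Finset.mul_sum, hps, hprs]
    field_simp
    ring
  rw [step5, add_zero]
  refine Finset.sum_nonneg fun i _ => ?_
  have := hppos i
  have := hprpos i
  positivity

lemma Vfun_hasFDerivAt {d : ℕ} (pr : Fin d → ℝ) (p : Fin d → ℝ) (hp : ∀ i, 0 < p i) :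
    HasFDerivAt (Vfun d pr)
      (∑ i, (-(pr i) * (p i)⁻¹) • (ContinuousLinearMap.proj i : (Fin d → ℝ) →L[ℝ] ℝ)) p := by
  refine HasFDerivAt.fun_sum fun i _ => ?_
  have hproj : HasFDerivAt (fun q : Fin d → ℝ => q i)
      (ContinuousLinearMap.proj i : (Fin d → ℝ) →L[ℝ] ℝ) p :=
    (ContinuousLinearMap.proj i : (Fin d → ℝ) →L[ℝ] ℝ).hasFDerivAt
  have h1 : HasFDerivAt (fun q : Fin d → ℝ => Real.log (q i))
      ((p i)⁻¹ • (ContinuousLinearMap.proj i : (Fin d → ℝ) →L[ℝ] ℝ)) p :=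
    (Real.hasDerivAt_log (hp i).ne').comp_hasFDerivAt (h₂ := Real.log) p hproj
  have h2 := (h1.const_mul (pr i)).const_sub (pr i * Real.log (pr i))
  have h3 : HasFDerivAt (fun q : Fin d → ℝ => pr i * (Real.log (pr i) - Real.log (q i)))
      (-(pr i • (p i)⁻¹ • (ContinuousLinearMap.proj i : (Fin d → ℝ) →L[ℝ] ℝ)))  p := by
    exact h2.congr_of_eventuallyEq (Filter.Eventually.of_forall fun q => by ring)
  refine h3.congr_fderiv ?_
  rw [← smul_smul]
  exact (neg_smul (pr i) _).symm

lemma V_comp_deriv {d : ℕ} (pr : Fin d → ℝ) (Y : ℝ → Fin d → ℝ) (s : Set ℝ) (t : ℝ)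
    (f : Fin d → ℝ) (hY : HasDerivWithinAt Y f s t) (hpos : ∀ i, 0 < Y t i) :
    HasDerivWithinAt (fun u => Vfun d pr (Y u)) (-∑ i, pr i / Y t i * f i) s t := by
  have h := (Vfun_hasFDerivAt pr (Y t) hpos).comp_hasDerivWithinAt t hY
  refine h.congr_deriv ?_
  simp only [ContinuousLinearMap.sum_apply, ContinuousLinearMap.smul_apply,
    ContinuousLinearMap.proj_apply, smul_eq_mul]
  rw [← Finset.sum_neg_distrib]
  refine Finset.sum_congr rfl fun i _ => ?_
  rw [div_eq_mul_inv]
  ring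

lemma log_lipschitz_s7 {a b m' : ℝ} (hm : 0 < m') (ha : m' ≤ a) (hb : m' ≤ b) :
    |Real.log a - Real.log b| ≤ |a - b| / m' := by
  have ha0 : 0 < a := lt_of_lt_of_le hm ha
  have hb0 : 0 < b := lt_of_lt_of_le hm hb
  rw [abs_le]
  constructor
  · have h := Real.log_le_sub_one_of_pos (div_pos hb0 ha0)
    rw [Real.log_div hb0.ne' ha0.ne'] at h
    have h2 : (b - a) / a ≤ |a - b| / m' := by
      have : b - a ≤ |a - b| := by rw [abs_sub_comm]; exact le_abs_self _
      calc (b - a) / a ≤ |a - b| / a := by gcongr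
        _ ≤ |a - b| / m' := by gcongr
    have : b / a - 1 = (b - a) / a := by field_simp
    linarith
  · have h := Real.log_le_sub_one_of_pos (div_pos ha0 hb0)
    rw [Real.log_div ha0.ne' hb0.ne'] at h
    have h2 : (a - b) / b ≤ |a - b| / m' := by
      have : a - b ≤ |a - b| := le_abs_self _
      calc (a - b) / b ≤ |a - b| / b := by gcongr
        _ ≤ |a - b| / m' := by gcongr
    have : a / b - 1 = (a - b) / b := by field_simp
    linarith

lemma gibbs_pos {d : ℕ} (pr p : Fin d → ℝ) (hprpos : ∀ i, 0 < pr i) (hppos : ∀ i, 0 < p i)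
    (hprs : ∑ i, pr i = 1) (hps : ∑ i, p i = 1) (hne : p ≠ pr) :
    0 < Vfun d pr p := by
  obtain ⟨j, hj⟩ : ∃ j, p j ≠ pr j := by
    by_contra h
    push_neg at h
    exact hne (funext h)
  have key : ∑ i, pr i * (Real.log (p i) - Real.log (pr i)) < ∑ i, (p i - pr i) := by
    refine Finset.sum_lt_sum (fun i _ => ?_) ⟨j, Finset.mem_univ j, ?_⟩
    · have h := Real.log_le_sub_one_of_pos (div_pos (hppos i) (hprpos i))
      rw [Real.log_div (hppos i).ne' (hprpos i).ne'] at h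
      have h0 : pr i ≠ 0 := (hprpos i).ne'
      have h2 : Real.log (p i) - Real.log (pr i) ≤ (p i - pr i) / pr i := by
        have he : p i / pr i - 1 = (p i - pr i) / pr i := by field_simp
        linarith
      calc pr i * (Real.log (p i) - Real.log (pr i)) ≤ pr i * ((p i - pr i) / pr i) := by
            exact mul_le_mul_of_nonneg_left h2 (hprpos i).le
        _ = p i - pr i := by rw [mul_div_assoc'] ; exact mul_div_cancel_left₀ _ h0
    · have h := Real.log_lt_sub_one_of_pos (div_pos (hppos j) (hprpos j))
          (by simp [div_eq_one_iff_eq (hprpos j).ne', hj])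
      rw [Real.log_div (hppos j).ne' (hprpos j).ne'] at h
      have h0 : pr j ≠ 0 := (hprpos j).ne'
      have h2 : Real.log (p j) - Real.log (pr j) < (p j - pr j) / pr j := by
        have he : p j / pr j - 1 = (p j - pr j) / pr j := by field_simp
        linarith
      calc pr j * (Real.log (p j) - Real.log (pr j)) < pr j * ((p j - pr j) / pr j) := by
            exact (mul_lt_mul_iff_right₀ (hprpos j)).mpr h2
        _ = p j - pr j := by rw [mul_div_assoc'] ; exact mul_div_cancel_left₀ _ h0
  have hsum : ∑ i, (p i - pr i) = 0 := by
    rw [Finset.sum_sub_distrib, hps, hprs, sub_self]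
  have : ∑ i, pr i * (Real.log (p i) - Real.log (pr i)) < 0 := by rwa [hsum] at key
  have heq : Vfun d pr p = -∑ i, pr i * (Real.log (p i) - Real.log (pr i)) := by
    simp only [Vfun, ← Finset.sum_neg_distrib]
    refine Finset.sum_congr rfl fun i _ => ?_
    ring
  rw [heq]
  linarith

lemma margin {d : ℕ} (pr p : Fin d → ℝ) (m c : ℝ) (hm : 0 < m) (hmle : ∀ i, m ≤ pr i)
    (hprle1 : ∀ i, pr i ≤ 1)
    (hppos : ∀ i, 0 < p i) (hple1 : ∀ i, p i ≤ 1) (hc : 0 < c)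
    (hV : Vfun d pr p ≤ c) (j : Fin d) :
    Real.exp ((∑ i, pr i * Real.log (pr i) - c) / m) ≤ p j := by
  set C0 := ∑ i, pr i * Real.log (pr i) with hC0
  have hexp : Vfun d pr p = C0 - ∑ i, pr i * Real.log (p i) := by
    simp only [Vfun, hC0, mul_sub, Finset.sum_sub_distrib]
  have hsumlog : C0 - c ≤ ∑ i, pr i * Real.log (p i) := by linarith [hV, hexp ▸ hV]
  have hterm : ∀ i, pr i * Real.log (p i) ≤ 0 := fun i =>
    mul_nonpos_of_nonneg_of_nonpos (le_of_lt (lt_of_lt_of_le hm (hmle i)))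
      (Real.log_nonpos (hppos i).le (hple1 i))
  have hj : C0 - c ≤ pr j * Real.log (p j) := by
    have h1 : ∑ i, pr i * Real.log (p i) ≤ pr j * Real.log (p j) := by
      have := Finset.sum_le_sum_of_subset_of_nonneg (f := fun i => -(pr i * Real.log (p i)))
        (Finset.singleton_subset_iff.mpr (Finset.mem_univ j))
        (fun i _ _ => neg_nonneg.mpr (hterm i))
      simp only [Finset.sum_singleton, Finset.sum_neg_distrib] at this
      linarith
    linarith
  have hprj : 0 < pr j := lt_of_lt_of_le hm (hmle j)
  have hlog : (C0 - c) / pr j ≤ Real.log (p j) := by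
    rw [div_le_iff₀ hprj]
    linarith [hj]
  have hmono : (C0 - c) / m ≤ (C0 - c) / pr j := by
    rw [div_eq_mul_inv, div_eq_mul_inv]
    have hinv : (pr j)⁻¹ ≤ m⁻¹ := by
      apply inv_anti₀ hm (hmle j)
    have hneg : C0 - c ≤ 0 := by
      have : C0 ≤ 0 := Finset.sum_nonpos fun i _ =>
        mul_nonpos_of_nonneg_of_nonpos (le_of_lt (lt_of_lt_of_le hm (hmle i)))
          (Real.log_nonpos (lt_of_lt_of_le hm (hmle i)).le (hprle1 i))
      linarith
    exact mul_le_mul_of_nonpos_left hinv hneg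
  calc Real.exp ((C0 - c) / m) ≤ Real.exp (Real.log (p j)) :=
        Real.exp_le_exp.mpr (le_trans hmono hlog)
    _ = p j := Real.exp_log (hppos j)

/-- For `r ∈ (0,1]` and `δ > 0` there is `η > 0` such that
`sup{ |y^{(r)}(t,p) − p^{(r)}| : t ≥ 0, p ∈ Δ, |p − p^{(r)}| < η } < δ`. -/
theorem stmt7 (d : ℕ) (hd : 1 ≤ d) (Mt : Matrix (Fin d) (Fin d) ℝ)
    (hskew : ∀ i j, Mt j i = - Mt i j) (hbound : ∀ i j, |Mt i j| ≤ 1)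
    (r : ℝ) (hr0 : 0 < r) (hr1 : r ≤ 1) (δ : ℝ) (hδ : 0 < δ)
    -- `pr` is the (unique) zero of `f^{(r)}` in the simplex
    (pr : Fin d → ℝ) (hpr : pr ∈ unitSimplex d) (hprz : fvec d Mt r pr = 0)
    (hpruniq : ∀ q ∈ unitSimplex d, fvec d Mt r q = 0 → q = pr)
    -- `y p₀` is the solution of `y' = f^{(r)}(y)` with `y(0) = p₀`, for each `p₀ ∈ Δ`
    (y : (Fin d → ℝ) → ℝ → Fin d → ℝ)
    (hy0 : ∀ p₀ ∈ unitSimplex d, y p₀ 0 = p₀)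
    (hyΔ : ∀ p₀ ∈ unitSimplex d, ∀ t ∈ Ici (0 : ℝ), y p₀ t ∈ unitSimplex d)
    (hyD : ∀ p₀ ∈ unitSimplex d, ∀ t ∈ Ici (0 : ℝ),
      HasDerivWithinAt (y p₀) (fvec d Mt r (y p₀ t)) (Ici 0) t) :
    ∃ η > 0,
      (⨆ t ∈ Ici (0 : ℝ),
        ⨆ p ∈ {q | q ∈ unitSimplex d ∧ l1dist q pr < η}, l1dist (y p t) pr) < δ := by
  haveI : Nonempty (Fin d) := Fin.pos_iff_nonempty.mp hd
  obtain ⟨hprnn, hprs⟩ := hpr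
  have hd0 : 0 < d := hd
  have hdR : (0:ℝ) < d := by exact_mod_cast hd0
  have hprzi : ∀ i, fvec d Mt r pr i = 0 := fun i => by
    have := congrFun hprz i; simpa using this
  -- pr is strictly positive
  have hprpos : ∀ i, 0 < pr i := by
    intro i
    rcases lt_or_eq_of_le (hprnn i) with h | h
    · exact h
    · exfalso
      have h0 := hprzi i
      simp only [fvec, ← h] at h0
      have : r * (1 / (d:ℝ)) = 0 := by linarith
      have h1 : (0:ℝ) < r * (1 / d) := by positivity
      linarith
  have hprle1 : ∀ i, pr i ≤ 1 := by
    intro i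
    rw [← hprs]
    exact Finset.single_le_sum (fun j _ => hprnn j) (Finset.mem_univ i)
  -- the minimum coordinate of pr
  set m : ℝ := Finset.univ.inf' Finset.univ_nonempty pr with hm
  have hm_le : ∀ i, m ≤ pr i := fun i => Finset.inf'_le _ (Finset.mem_univ i)
  have hm_pos : 0 < m := (Finset.lt_inf'_iff _).mpr fun i _ => hprpos i
  have hm_le1 : m ≤ 1 := le_trans (hm_le (Classical.arbitrary _)) (hprle1 _)
  set C0 : ℝ := ∑ i, pr i * Real.log (pr i) with hC0
  set b1 : ℝ := Real.exp ((C0 - 1) / m) with hb1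
  have hb1pos : 0 < b1 := Real.exp_pos _
  set b : ℝ := min b1 (m / 2) with hb
  have hbpos : 0 < b := lt_min hb1pos (by positivity)
  have hb_le_b1 : b ≤ b1 := min_le_left _ _
  have hb_le_m2 : b ≤ m / 2 := min_le_right _ _
  set δ₂ : ℝ := δ / 2 with hδ₂def
  have hδ₂ : 0 < δ₂ := by positivity
  -- basic l1dist facts
  have habs : ∀ (p q : Fin d → ℝ) (i : Fin d), |p i - q i| ≤ l1dist p q := by
    intro p q i
    show |p i - q i| ≤ ∑ j, |p j - q j|
    exact Finset.single_le_sum (f := fun j => |p j - q j|) (fun j _ => abs_nonneg _)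
      (Finset.mem_univ i)
  have hl1nonneg : ∀ (p q : Fin d → ℝ), 0 ≤ l1dist p q := fun p q =>
    Finset.sum_nonneg fun i _ => abs_nonneg _
  have hl1symm : ∀ (p q : Fin d → ℝ), l1dist p q = l1dist q p := by
    intro p q
    show ∑ i, |p i - q i| = ∑ i, |q i - p i|
    exact Finset.sum_congr rfl fun i _ => abs_sub_comm _ _
  have hΔle1 : ∀ p ∈ unitSimplex d, ∀ i, p i ≤ 1 := by
    intro p hp i
    rw [← hp.2]
    exact Finset.single_le_sum (fun j _ => hp.1 j) (Finset.mem_univ i)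
  -- continuity of V on the region with coordinates ≥ b/2
  have hVcont : ContinuousOn (Vfun d pr) {p : Fin d → ℝ | ∀ i, b / 2 ≤ p i} := by
    unfold Vfun
    apply continuousOn_finset_sum _ fun i _ => ?_
    apply ContinuousOn.mul continuousOn_const
    apply ContinuousOn.sub continuousOn_const
    apply ContinuousOn.log (continuous_apply i).continuousOn
    intro p hp
    exact ne_of_gt (lt_of_lt_of_le (by positivity) (hp i))
  -- the constant c
  have hl1cont : Continuous (fun p : Fin d → ℝ => l1dist p pr) := by
    show Continuous (fun p : Fin d → ℝ => ∑ i, |p i - pr i|)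
    exact continuous_finset_sum _ fun i _ =>
      ((continuous_apply i).sub continuous_const).abs
  have hsimplex_closed : IsClosed (unitSimplex d) := by
    have he : unitSimplex d =
        (⋂ i, (fun x : Fin d → ℝ => x i) ⁻¹' Ici 0) ∩
          ((fun x : Fin d → ℝ => ∑ i, x i) ⁻¹' {1}) := by
      ext x
      simp [unitSimplex, Set.mem_iInter, Set.mem_preimage]
    rw [he]
    exact (isClosed_iInter fun i =>
      isClosed_Ici.preimage (continuous_apply i)).inter
      (isClosed_singleton.preimage (continuous_finset_sum _ fun i _ => continuous_apply i))
  obtain ⟨c, hc0, hc12, hcP⟩ : ∃ c : ℝ, 0 < c ∧ c ≤ 1 / 2 ∧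
      ∀ p ∈ unitSimplex d, (∀ i, b / 2 ≤ p i) → δ₂ ≤ l1dist p pr → c < Vfun d pr p := by
    set K := {p : Fin d → ℝ | p ∈ unitSimplex d ∧ (∀ i, b / 2 ≤ p i) ∧ δ₂ ≤ l1dist p pr}
      with hK
    by_cases hKne : K.Nonempty
    · have hKclosed : IsClosed K := by
        have h2 : IsClosed {p : Fin d → ℝ | ∀ i, b / 2 ≤ p i} := by
          have he : {p : Fin d → ℝ | ∀ i, b / 2 ≤ p i}
              = ⋂ i, (fun p : Fin d → ℝ => p i) ⁻¹' Ici (b / 2) := by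
            ext x; simp [Set.mem_iInter]
          rw [he]
          exact isClosed_iInter fun i => isClosed_Ici.preimage (continuous_apply i)
        have h3 : IsClosed {p : Fin d → ℝ | δ₂ ≤ l1dist p pr} :=
          isClosed_Ici.preimage hl1cont
        have he : K = unitSimplex d ∩ ({p : Fin d → ℝ | ∀ i, b / 2 ≤ p i}
            ∩ {p : Fin d → ℝ | δ₂ ≤ l1dist p pr}) := by
          rfl
        rw [he]
        exact hsimplex_closed.inter (h2.inter h3)
      have hKbdd : Bornology.IsBounded K := by
        rw [isBounded_iff_forall_norm_le]
        refine ⟨1, fun x hx => ?_⟩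
        rw [pi_norm_le_iff_of_nonneg zero_le_one]
        intro i
        rw [Real.norm_eq_abs, abs_le]
        exact ⟨by linarith [hx.1.1 i], hΔle1 x hx.1 i⟩
      have hKcompact : IsCompact K := Metric.isCompact_of_isClosed_isBounded hKclosed hKbdd
      have hVcontK : ContinuousOn (Vfun d pr) K := hVcont.mono fun p hp => hp.2.1
      obtain ⟨p₂, hp₂K, hp₂min⟩ := hKcompact.exists_isMinOn hKne hVcontK
      have hp₂ne : p₂ ≠ pr := by
        intro h
        have : l1dist p₂ pr = 0 := by simp [h, l1dist]
        have := hp₂K.2.2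
        linarith
      have hp₂pos : ∀ i, 0 < p₂ i := fun i =>
        lt_of_lt_of_le (by positivity) (hp₂K.2.1 i)
      have hv0 : 0 < Vfun d pr p₂ := gibbs_pos pr p₂ hprpos hp₂pos hprs hp₂K.1.2 hp₂ne
      refine ⟨min (1 / 2) (Vfun d pr p₂ / 2), lt_min (by norm_num) (by linarith),
        min_le_left _ _, fun p hp hpb hpd => ?_⟩
      have h1 : Vfun d pr p₂ ≤ Vfun d pr p := hp₂min ⟨hp, hpb, hpd⟩
      calc min (1 / 2) (Vfun d pr p₂ / 2) ≤ Vfun d pr p₂ / 2 := min_le_right _ _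
        _ < Vfun d pr p₂ := by linarith
        _ ≤ Vfun d pr p := h1
    · refine ⟨1 / 2, by norm_num, le_refl _, fun p hp hpb hpd => ?_⟩
      exact absurd ⟨hp, hpb, hpd⟩ fun hmem => hKne ⟨p, hmem⟩
  -- the choice of η
  set η : ℝ := min (m / 2) (c * m / 4) with hη
  have hηpos : 0 < η := lt_min (by positivity) (by positivity)
  refine ⟨η, hηpos, ?_⟩
  -- main pointwise bound
  have main : ∀ p₀ ∈ unitSimplex d, l1dist p₀ pr < η →
      ∀ t ∈ Ici (0:ℝ), l1dist (y p₀ t) pr ≤ δ₂ := by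
    intro p₀ hp₀ hp₀η
    set Y := y p₀ with hY
    have hY0 : Y 0 = p₀ := hy0 p₀ hp₀
    have hYΔ : ∀ t ∈ Ici (0:ℝ), Y t ∈ unitSimplex d := hyΔ p₀ hp₀
    have hYD : ∀ t ∈ Ici (0:ℝ), HasDerivWithinAt Y (fvec d Mt r (Y t)) (Ici 0) t :=
      hyD p₀ hp₀
    have hYcont : ContinuousOn Y (Ici 0) := fun t ht => (hYD t ht).continuousWithinAt
    have hYicont : ∀ i, ContinuousOn (fun s => Y s i) (Ici 0) := fun i =>
      (continuous_apply i).comp_continuousOn hYcont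
    -- initial coordinates are at least m/2
    have hp₀i : ∀ i, m / 2 ≤ p₀ i := by
      intro i
      have h1 : |p₀ i - pr i| ≤ l1dist p₀ pr := habs _ _ i
      have h2 : l1dist p₀ pr ≤ m / 2 := le_trans hp₀η.le (min_le_left _ _)
      have h3 := (abs_le.mp (le_trans h1 h2)).1
      have := hm_le i
      linarith
    -- initial value of V is at most c/2 (strictly less in fact)
    have hVp₀ : Vfun d pr p₀ < c / 2 := by
      have hstep : ∀ i, pr i * (Real.log (pr i) - Real.log (p₀ i))
          ≤ |pr i - p₀ i| / (m / 2) := by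
        intro i
        have hll := log_lipschitz_s7 (half_pos hm_pos)
          (le_trans (half_le_self hm_pos.le) (hm_le i)) (hp₀i i)
        calc pr i * (Real.log (pr i) - Real.log (p₀ i))
            ≤ pr i * |Real.log (pr i) - Real.log (p₀ i)| :=
              mul_le_mul_of_nonneg_left (le_abs_self _) (hprpos i).le
          _ ≤ 1 * (|pr i - p₀ i| / (m / 2)) :=
              mul_le_mul (hprle1 i) hll (abs_nonneg _) zero_le_one
          _ = |pr i - p₀ i| / (m / 2) := one_mul _
      have h1 : Vfun d pr p₀ ≤ l1dist p₀ pr / (m / 2) := by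
        calc Vfun d pr p₀ ≤ ∑ i, |pr i - p₀ i| / (m / 2) :=
              Finset.sum_le_sum fun i _ => hstep i
          _ = (∑ i, |pr i - p₀ i|) / (m / 2) := by rw [Finset.sum_div]
          _ = l1dist pr p₀ / (m / 2) := rfl
          _ = l1dist p₀ pr / (m / 2) := by rw [hl1symm pr p₀]
      have h2 : l1dist p₀ pr / (m / 2) < η / (m / 2) := by gcongr
      have h3 : η / (m / 2) ≤ (c * m / 4) / (m / 2) := by gcongr; exact min_le_right _ _
      have h4 : (c * m / 4) / (m / 2) = c / 2 := by field_simp; ring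
      linarith
    -- monotonicity of V along the trajectory as long as coordinates stay ≥ b/2
    have F2 : ∀ T, 0 ≤ T → (∀ s ∈ Icc (0:ℝ) T, ∀ i, b / 2 ≤ Y s i) →
        Vfun d pr (Y T) ≤ Vfun d pr p₀ := by
      intro T hT hgood
      have hanti : AntitoneOn (fun u => Vfun d pr (Y u)) (Icc 0 T) := by
        apply antitoneOn_of_deriv_nonpos (convex_Icc 0 T)
        · exact hVcont.comp (hYcont.mono Icc_subset_Ici_self) fun s hs => hgood s hs
        · intro x hx
          rw [interior_Icc] at hx
          have hxIci : x ∈ Ici (0:ℝ) := le_of_lt hx.1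
          have hpos : ∀ i, 0 < Y x i := fun i =>
            lt_of_lt_of_le (by positivity) (hgood x ⟨hx.1.le, hx.2.le⟩ i)
          exact ((V_comp_deriv pr Y (Ici 0) x _ (hYD x hxIci) hpos).hasDerivAt
            (Ici_mem_nhds hx.1)).differentiableAt.differentiableWithinAt
        · intro x hx
          rw [interior_Icc] at hx
          have hxIci : x ∈ Ici (0:ℝ) := le_of_lt hx.1
          have hpos : ∀ i, 0 < Y x i := fun i =>
            lt_of_lt_of_le (by positivity) (hgood x ⟨hx.1.le, hx.2.le⟩ i)
          have hder := (V_comp_deriv pr Y (Ici 0) x _ (hYD x hxIci) hpos).hasDerivAt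
            (Ici_mem_nhds hx.1)
          rw [hder.deriv]
          have hkey := key_alg d hd0 Mt hskew r hr0.le pr hprpos hprs hprzi (Y x) hpos
            (hYΔ x hxIci).2
          linarith
      have h := hanti (Set.left_mem_Icc.mpr hT) (Set.right_mem_Icc.mpr hT) hT
      simpa only [hY0] using h
    -- level set consequences
    have F3 : ∀ T, 0 ≤ T → (∀ s ∈ Icc (0:ℝ) T, ∀ i, b / 2 ≤ Y s i) →
        (∀ i, b ≤ Y T i) ∧ l1dist (Y T) pr < δ₂ := by
      intro T hT hgood
      have hVT : Vfun d pr (Y T) < c / 2 := lt_of_le_of_lt (F2 T hT hgood) hVp₀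
      have hYTΔ := hYΔ T hT
      have hYTpos : ∀ i, 0 < Y T i := fun i =>
        lt_of_lt_of_le (by positivity) (hgood T (Set.right_mem_Icc.mpr hT) i)
      constructor
      · intro i
        have hmar := margin pr (Y T) m 1 hm_pos hm_le hprle1 hYTpos
          (hΔle1 _ hYTΔ) one_pos (by linarith) i
        exact le_trans hb_le_b1 hmar
      · by_contra hdist
        push_neg at hdist
        have := hcP (Y T) hYTΔ (hgood T (Set.right_mem_Icc.mpr hT)) hdist
        linarith
    -- core invariance
    have core : ∀ t₁, 0 ≤ t₁ → ∀ s ∈ Icc (0:ℝ) t₁, ∀ i, b / 2 ≤ Y s i := by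
      intro t₁ ht₁
      set A := {t : ℝ | t ∈ Icc (0:ℝ) t₁ ∧ ∀ s ∈ Icc (0:ℝ) t, ∀ i, b / 2 ≤ Y s i} with hA
      have h0A : (0:ℝ) ∈ A := by
        refine ⟨⟨le_refl 0, ht₁⟩, fun s hs i => ?_⟩
        have hs0 : s = 0 := le_antisymm hs.2 hs.1
        rw [hs0, hY0]
        linarith [hp₀i i, hb_le_m2, hbpos]
      have hAne : A.Nonempty := ⟨0, h0A⟩
      have hbdd : BddAbove A := ⟨t₁, fun t ht => ht.1.2⟩
      set T := sSup A with hT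
      have hT0 : 0 ≤ T := le_csSup hbdd h0A
      have hTle : T ≤ t₁ := csSup_le hAne fun t ht => ht.1.2
      have hS1 : ∀ s ∈ Ico (0:ℝ) T, ∀ i, b / 2 ≤ Y s i := by
        intro s hs i
        obtain ⟨a, haA, hsa⟩ := exists_lt_of_lt_csSup hAne hs.2
        exact haA.2 s ⟨hs.1, hsa.le⟩ i
      have hS2 : ∀ i, b / 2 ≤ Y T i := by
        rcases eq_or_lt_of_le hT0 with h | h
        · intro i
          rw [← h, hY0]
          linarith [hp₀i i, hb_le_m2, hbpos]
        · intro i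
          have hne : (𝓝[Ico (0:ℝ) T] T).NeBot := by
            apply mem_closure_iff_nhdsWithin_neBot.mp
            rw [closure_Ico h.ne]
            exact ⟨hT0, le_refl T⟩
          have htd : Tendsto (fun s => Y s i) (𝓝[Ico (0:ℝ) T] T) (𝓝 (Y T i)) :=
            (hYicont i T hT0).mono Ico_subset_Ici_self
          exact ge_of_tendsto htd (eventually_of_mem self_mem_nhdsWithin
            fun s hs => hS1 s hs i)
      have hS3 : ∀ s ∈ Icc (0:ℝ) T, ∀ i, b / 2 ≤ Y s i := by
        intro s hs i
        rcases lt_or_eq_of_le hs.2 with h | h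
        · exact hS1 s ⟨hs.1, h⟩ i
        · rw [h]; exact hS2 i
      rcases eq_or_lt_of_le hTle with hTt | hTt
      · rw [hTt] at hS3
        exact hS3
      · exfalso
        have hYTb := (F3 T hT0 hS3).1
        have hev : ∀ᶠ s in 𝓝[Icc (0:ℝ) t₁] T, ∀ i, b / 2 < Y s i := by
          rw [Filter.eventually_all]
          intro i
          have hc : ContinuousWithinAt (fun s => Y s i) (Icc (0:ℝ) t₁) T :=
            ((hYicont i) T hT0).mono (fun s hs => hs.1)
          exact hc.eventually (eventually_gt_nhds
            (lt_of_lt_of_le (half_lt_self hbpos) (hYTb i)))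
        rw [eventually_iff, Metric.mem_nhdsWithin_iff] at hev
        obtain ⟨ε, hε, hεP⟩ := hev
        set t' := min (T + ε / 2) t₁ with ht'
        have hTt' : T < t' := lt_min (by linarith) hTt
        have ht'A : t' ∈ A := by
          refine ⟨⟨le_trans hT0 hTt'.le, min_le_right _ _⟩, fun s hs i => ?_⟩
          rcases le_or_gt s T with h | h
          · exact hS3 s ⟨hs.1, h⟩ i
          · have hsd : s ∈ Metric.ball T ε := by
              rw [Metric.mem_ball, Real.dist_eq, abs_of_pos (by linarith)]
              have h1 : s ≤ T + ε / 2 := le_trans hs.2 (min_le_left _ _)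
              linarith
            have hs01 : s ∈ Icc (0:ℝ) t₁ := ⟨hs.1, le_trans hs.2 (min_le_right _ _)⟩
            exact (hεP ⟨hsd, hs01⟩ i).le
        have : t' ≤ T := le_csSup hbdd ht'A
        linarith
    intro t ht
    exact (F3 t ht fun s hs i => core t ht s hs i).2.le
  -- conclude with the iSup computation
  have hbound : (⨆ t ∈ Ici (0:ℝ),
      ⨆ p ∈ {q | q ∈ unitSimplex d ∧ l1dist q pr < η}, l1dist (y p t) pr) ≤ δ₂ := by
    refine Real.iSup_le (fun t => Real.iSup_le (fun ht => Real.iSup_le (fun p =>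
      Real.iSup_le (fun hp => main p hp.1 hp.2 t ht) hδ₂.le) hδ₂.le) hδ₂.le) hδ₂.le
  calc (⨆ t ∈ Ici (0:ℝ),
      ⨆ p ∈ {q | q ∈ unitSimplex d ∧ l1dist q pr < η}, l1dist (y p t) pr) ≤ δ₂ := hbound
    _ < δ := by rw [hδ₂def]; linarith
end

section
/- Let {X(n) : n ∈ ℕ} be an irreducible time-homogeneous Markov chain with finite state space S and stationary distribution π. Then for every subset S' ⊆ S and every ε > 0, there exists C > 0 such that for all sufficiently large n, P(|s_n(S') − π(S')| ≤ ε) ≥ 1 − e^{−Cn}. -/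
set_option maxHeartbeats 1000000

open Finset Filter MeasureTheory


lemma exp_chord (t x B : ℝ) (hB : 0 < B) (hx : |x| ≤ B) :
    Real.exp (t * x) ≤ Real.cosh (t * B) + (x / B) * Real.sinh (t * B) := by
  have h1 : -B ≤ x := (abs_le.mp hx).1
  have h2 : x ≤ B := (abs_le.mp hx).2
  have hB2 : (0:ℝ) < 2 * B := by linarith
  set a : ℝ := (B - x) / (2 * B) with ha
  set b : ℝ := (B + x) / (2 * B) with hb
  have ha0 : 0 ≤ a := by rw [ha]; apply div_nonneg <;> linarith
  have hb0 : 0 ≤ b := by rw [hb]; apply div_nonneg <;> linarith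
  have hab : a + b = 1 := by rw [ha, hb]; field_simp; ring
  have hcomb : a * (t * (-B)) + b * (t * B) = t * x := by
    rw [ha, hb]; field_simp; ring
  have hconv := convexOn_exp.2 (Set.mem_univ (t * (-B))) (Set.mem_univ (t * B)) ha0 hb0 hab
  rw [smul_eq_mul, smul_eq_mul, smul_eq_mul, smul_eq_mul, hcomb] at hconv
  refine hconv.trans (le_of_eq ?_)
  rw [Real.cosh_eq, Real.sinh_eq, ha, hb]
  have : t * -B = -(t*B) := by ring
  rw [this]
  field_simp
  ring

lemma weighted_exp_bound {S : Type} [Fintype S] (w D : S → ℝ) (B t : ℝ) (hB : 0 < B)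
    (hw0 : ∀ s, 0 ≤ w s) (hw1 : ∑ s, w s = 1) (hmean : ∑ s, w s * D s = 0)
    (hbd : ∀ s, |D s| ≤ B) :
    ∑ s, w s * Real.exp (t * D s) ≤ Real.cosh (t * B) := by
  calc ∑ s, w s * Real.exp (t * D s)
      ≤ ∑ s, w s * (Real.cosh (t * B) + (D s / B) * Real.sinh (t * B)) := by
        apply Finset.sum_le_sum
        intro s _
        exact mul_le_mul_of_nonneg_left (exp_chord t (D s) B hB (hbd s)) (hw0 s)
    _ = Real.cosh (t * B) := by
        have : ∀ s, w s * (Real.cosh (t * B) + (D s / B) * Real.sinh (t * B))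
            = w s * Real.cosh (t * B) + (w s * D s) * (Real.sinh (t * B) / B) := by
          intro s; field_simp
        simp_rw [this]
        rw [Finset.sum_add_distrib, ← Finset.sum_mul, ← Finset.sum_mul, hw1, hmean]
        simp

-- existence of a good exponent
lemma exists_good_t (B δ : ℝ) (hB : 0 < B) (hδ : 0 < δ) :
    ∃ t : ℝ, 0 < t ∧ Real.cosh (t * B) < Real.exp (t * δ) := by
  set F : ℝ → ℝ := fun t => Real.exp (t * δ) - Real.cosh (t * B) with hF
  have h1 : HasDerivAt (fun t : ℝ => Real.exp (t * δ)) δ 0 := by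
    have := (Real.hasDerivAt_exp (0 * δ)).comp 0 ((hasDerivAt_id 0).mul_const δ)
    simpa [Function.comp_def] using this
  have h2 : HasDerivAt (fun t : ℝ => Real.cosh (t * B)) 0 0 := by
    have := (Real.hasDerivAt_cosh (0 * B)).comp 0 ((hasDerivAt_id 0).mul_const B)
    simpa [Function.comp_def] using this
  have hd : HasDerivAt F δ 0 := by
    have := h1.sub h2; rw [sub_zero] at this; exact this
  have hslope : Filter.Tendsto (fun t => F t / t) (nhdsWithin 0 (Set.Ioi 0)) (nhds δ) := by
    have := hd.hasDerivWithinAt (s := Set.Ioi 0)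
    have h := hasDerivWithinAt_iff_tendsto_slope.mp this
    have hF0 : F 0 = 0 := by simp [hF]
    refine h.congr' ?_ |>.mono_left ?_
    · filter_upwards [self_mem_nhdsWithin] with t ht
      simp [slope, hF0, div_eq_inv_mul]
    · exact nhdsWithin_mono 0 (by intro x hx; exact ⟨hx, ne_of_gt hx⟩)
  have hev : ∀ᶠ t in nhdsWithin 0 (Set.Ioi 0), 0 < F t / t := by
    exact hslope.eventually (eventually_gt_nhds hδ) |>.mono (fun t ht => ht)
  have : ∃ t ∈ Set.Ioi (0:ℝ), 0 < F t / t := by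
    rcases (hev.and self_mem_nhdsWithin).exists with ⟨t, h1, h2⟩
    exact ⟨t, h2, h1⟩
  rcases this with ⟨t, ht, htF⟩
  refine ⟨t, ht, ?_⟩
  have : 0 < F t := by
    have := mul_pos htF ht
    rwa [div_mul_cancel₀] at this
    exact ne_of_gt ht
  simp only [hF] at this
  linarith


section
variable {S : Type} [Fintype S] [DecidableEq S] [Nonempty S]

lemma pow_nonneg_entries (P : Matrix S S ℝ) (hP0 : ∀ p q, 0 ≤ P p q) :
    ∀ n, ∀ p q, 0 ≤ (P ^ n) p q := by
  intro n
  induction n with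
  | zero => intro p q; by_cases h : p = q <;> simp [Matrix.one_apply, h]
  | succ n ih =>
    intro p q
    rw [pow_succ, Matrix.mul_apply]
    exact Finset.sum_nonneg fun r _ => mul_nonneg (ih p r) (hP0 r q)

lemma pow_row_sum (P : Matrix S S ℝ) (hP1 : ∀ p, ∑ q, P p q = 1) :
    ∀ n, ∀ p, ∑ q, (P ^ n) p q = 1 := by
  intro n
  induction n with
  | zero => intro p; simp [Matrix.one_apply]
  | succ n ih =>
    intro p
    simp_rw [pow_succ, Matrix.mul_apply]
    rw [Finset.sum_comm]
    simp_rw [← Finset.mul_sum, hP1, mul_one]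
    exact ih p

lemma ker_is_const (P : Matrix S S ℝ) (hP0 : ∀ p q, 0 ≤ P p q) (hP1 : ∀ p, ∑ q, P p q = 1)
    (hirr : ∀ p q : S, ∃ n : ℕ, 1 ≤ n ∧ 0 < (P ^ n) p q)
    (g : S → ℝ) (hg : ∀ p, g p = ∑ q, P p q * g q) : ∀ p q, g p = g q := by
  have hiter : ∀ n p, g p = ∑ q, (P ^ n) p q * g q := by
    intro n
    induction n with
    | zero => intro p; simp [Matrix.one_apply]
    | succ n ih =>
      intro p
      rw [hg p]
      have : ∀ q, g q = ∑ r, (P ^ n) q r * g r := ih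
      calc ∑ q, P p q * g q = ∑ q, P p q * ∑ r, (P ^ n) q r * g r := by
            apply Finset.sum_congr rfl; intro q _; rw [← ih q]
        _ = ∑ r, (P ^ (n+1)) p r * g r := by
            simp_rw [Finset.mul_sum, pow_succ']
            rw [Finset.sum_comm]
            apply Finset.sum_congr rfl
            intro r _
            rw [Matrix.mul_apply, Finset.sum_mul]
            apply Finset.sum_congr rfl
            intro q _; ring
  -- take max
  obtain ⟨p₀, hp₀⟩ := Finite.exists_max g
  have hall : ∀ q, g q = g p₀ := by
    intro q
    rcases hirr p₀ q with ⟨n, -, hpos⟩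
    by_contra hne
    have hlt : g q < g p₀ := lt_of_le_of_ne (hp₀ q) hne
    have h1 : ∑ r, (P ^ n) p₀ r * g r < ∑ r, (P ^ n) p₀ r * g p₀ := by
      apply Finset.sum_lt_sum
      · intro r _
        exact mul_le_mul_of_nonneg_left (hp₀ r) (pow_nonneg_entries P hP0 n p₀ r)
      · exact ⟨q, Finset.mem_univ q, by
          exact mul_lt_mul_of_pos_left hlt hpos⟩
    rw [← Finset.sum_mul, pow_row_sum P hP1 n p₀, one_mul, ← hiter n p₀] at h1
    exact lt_irrefl _ h1
  intro p q; rw [hall p, hall q]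

lemma poisson_solution (P : Matrix S S ℝ) (hP0 : ∀ p q, 0 ≤ P p q) (hP1 : ∀ p, ∑ q, P p q = 1)
    (hirr : ∀ p q : S, ∃ n : ℕ, 1 ≤ n ∧ 0 < (P ^ n) p q)
    (π : S → ℝ) (hπ1 : ∑ p, π p = 1) (hπstat : ∀ q, ∑ p, π p * P p q = π q)
    (f : S → ℝ) :
    ∃ g : S → ℝ, ∀ p, g p - ∑ q, P p q * g q = f p - ∑ q, π q * f q := by
  classical
  set c : ℝ := ∑ q, π q * f q with hc
  set L : (S → ℝ) →ₗ[ℝ] (S → ℝ) := LinearMap.id - P.mulVecLin with hL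
  have hLapp : ∀ g p, L g p = g p - ∑ q, P p q * g q := by
    intro g p
    simp [hL, Matrix.mulVecLin_apply, Matrix.mulVec, dotProduct]
  -- kernel is the constants
  have hker : LinearMap.ker L = Submodule.span ℝ {(fun _ => (1:ℝ) : S → ℝ)} := by
    apply le_antisymm
    · intro g hg
      have hg' : ∀ p, g p = ∑ q, P p q * g q := by
        intro p
        have := congrFun (LinearMap.mem_ker.mp hg) p
        rw [hLapp] at this
        simp only [Pi.zero_apply] at this
        linarith
      have hconst := ker_is_const P hP0 hP1 hirr g hg'
      rw [Submodule.mem_span_singleton]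
      refine ⟨g (Classical.arbitrary S), ?_⟩
      funext p
      simp [hconst p (Classical.arbitrary S)]
    · rw [Submodule.span_le, Set.singleton_subset_iff]
      rw [SetLike.mem_coe, LinearMap.mem_ker]
      funext p
      rw [hLapp]
      simp [hP1 p]
  -- the functional φ
  set φ : (S → ℝ) →ₗ[ℝ] ℝ :=
    { toFun := fun v => ∑ p, π p * v p
      map_add' := by intro v w; simp [mul_add, Finset.sum_add_distrib]
      map_smul' := by intro a v; simp only [smul_eq_mul, RingHom.id_apply, Pi.smul_apply]; rw [Finset.mul_sum]; apply Finset.sum_congr rfl; intro p _; ring } with hφ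
  have hφapp : ∀ v, φ v = ∑ p, π p * v p := fun v => rfl
  have hone : (fun _ => (1:ℝ) : S → ℝ) ≠ 0 := by
    intro h
    have := congrFun h (Classical.arbitrary S)
    simp at this
  have hkerdim : Module.finrank ℝ (LinearMap.ker L) = 1 := by
    rw [hker]
    exact finrank_span_singleton hone
  have hφsurj : Function.Surjective φ := by
    intro r
    refine ⟨fun _ => r, ?_⟩
    rw [hφapp]
    simp_rw [← Finset.sum_mul]
    rw [hπ1, one_mul]
  have hφkerdim : Module.finrank ℝ (LinearMap.ker φ) + 1 = Module.finrank ℝ (S → ℝ) := by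
    have := LinearMap.finrank_range_add_finrank_ker φ
    rw [LinearMap.range_eq_top.mpr hφsurj] at this
    simpa [add_comm] using this
  have hLrangedim : Module.finrank ℝ (LinearMap.range L) + 1 = Module.finrank ℝ (S → ℝ) := by
    have := LinearMap.finrank_range_add_finrank_ker L
    rw [hkerdim] at this
    exact this
  have hle : LinearMap.range L ≤ LinearMap.ker φ := by
    rintro v ⟨g, rfl⟩
    rw [LinearMap.mem_ker, hφapp]
    have : ∀ p, L g p = g p - ∑ q, P p q * g q := hLapp g
    simp_rw [this, mul_sub, Finset.sum_sub_distrib]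
    have hswap : ∑ p, π p * ∑ q, P p q * g q = ∑ q, π q * g q := by
      simp_rw [Finset.mul_sum]
      rw [Finset.sum_comm]
      apply Finset.sum_congr rfl
      intro q _
      rw [← hπstat q, Finset.sum_mul]
      apply Finset.sum_congr rfl
      intro p _; ring
    rw [hswap, sub_self]
  have heq : LinearMap.range L = LinearMap.ker φ := by
    apply Submodule.eq_of_le_of_finrank_le hle
    omega
  have hmem : (fun p => f p - c) ∈ LinearMap.ker φ := by
    rw [LinearMap.mem_ker, hφapp]
    simp_rw [mul_sub, Finset.sum_sub_distrib, ← Finset.sum_mul]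
    rw [hπ1, one_mul, hc]
    simp [sub_self]
  rw [← heq] at hmem
  obtain ⟨g, hg⟩ := hmem
  refine ⟨g, fun p => ?_⟩
  have := congrFun hg p
  rw [hLapp] at this
  rw [this]
end


section
variable {S : Type} [Fintype S] [DecidableEq S]

lemma fin_telescope {n : ℕ} (h : Fin (n+1) → ℝ) :
    ∑ k : Fin n, (h k.castSucc - h k.succ) = h 0 - h (Fin.last n) := by
  induction n with
  | zero =>
    have : (Fin.last 0) = (0 : Fin 1) := rfl
    rw [this]
    simp
  | succ n ih =>
    rw [Fin.sum_univ_castSucc]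
    have h1 : ∑ k : Fin n, (h (Fin.castSucc k).castSucc - h (Fin.castSucc k).succ)
        = h 0 - h (Fin.castSucc (Fin.last n)) := by
      have := ih (fun j => h j.castSucc)
      simp only [Fin.succ_castSucc] at this ⊢
      rw [this, Fin.castSucc_zero]
    rw [h1, Fin.succ_last]
    ring

-- snoc facts for the weight and sum
lemma snoc_prod {n : ℕ} (P : Matrix S S ℝ) (q : Fin (n+1) → S) (s : S) :
    (∏ k : Fin (n+1), P ((Fin.snoc q s : Fin (n+2) → S) k.castSucc)
        ((Fin.snoc q s : Fin (n+2) → S) k.succ))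
      = (∏ k : Fin n, P (q k.castSucc) (q k.succ)) * P (q (Fin.last n)) s := by
  rw [Fin.prod_univ_castSucc]
  congr 1
  · apply Finset.prod_congr rfl
    intro k _
    rw [Fin.succ_castSucc, Fin.snoc_castSucc, Fin.snoc_castSucc]
  · rw [Fin.succ_last, Fin.snoc_castSucc, Fin.snoc_last]

lemma snoc_sumD {n : ℕ} (D : S → S → ℝ) (q : Fin (n+1) → S) (s : S) :
    (∑ k : Fin (n+1), D ((Fin.snoc q s : Fin (n+2) → S) k.castSucc)
        ((Fin.snoc q s : Fin (n+2) → S) k.succ))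
      = (∑ k : Fin n, D (q k.castSucc) (q k.succ)) + D (q (Fin.last n)) s := by
  rw [Fin.sum_univ_castSucc]
  congr 1
  · apply Finset.sum_congr rfl
    intro k _
    rw [Fin.succ_castSucc, Fin.snoc_castSucc, Fin.snoc_castSucc]
  · rw [Fin.succ_last, Fin.snoc_castSucc, Fin.snoc_last]

lemma snoc_zero {n : ℕ} (q : Fin (n+1) → S) (s : S) :
    (Fin.snoc q s : Fin (n+2) → S) 0 = q 0 := by
  have : (0 : Fin (n+2)) = Fin.castSucc 0 := rfl
  rw [this, Fin.snoc_castSucc]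
end


section
variable {S : Type} [Fintype S] [DecidableEq S]

lemma chernoff_sum (P : Matrix S S ℝ) (hP0 : ∀ p q, 0 ≤ P p q) (hP1 : ∀ p, ∑ q, P p q = 1)
    (ν : S → ℝ) (hν0 : ∀ s, 0 ≤ ν s) (hν1 : ∑ s, ν s = 1)
    (D : S → S → ℝ) (B t : ℝ) (hB : 0 < B)
    (hmean : ∀ p, ∑ s, P p s * D p s = 0) (hbd : ∀ p s, |D p s| ≤ B) :
    ∀ n : ℕ, ∑ p : Fin (n+1) → S,
        ((∏ k : Fin n, P (p k.castSucc) (p k.succ)) * ν (p 0))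
          * Real.exp (t * ∑ k : Fin n, D (p k.castSucc) (p k.succ))
      ≤ Real.cosh (t * B) ^ n := by
  intro n
  induction n with
  | zero =>
    rw [← Equiv.sum_comp (Equiv.funUnique (Fin 1) S).symm]
    simp [hν1]
  | succ n ih =>
    set e := Fin.snocEquiv (fun _ : Fin (n+2) => S) with he
    rw [← Equiv.sum_comp e, Fintype.sum_prod_type, Finset.sum_comm]
    have heval : ∀ (q : Fin (n+1) → S) (s : S),
        ((∏ k : Fin (n+1), P ((e (s, q)) k.castSucc) ((e (s, q)) k.succ)) * ν ((e (s, q)) 0))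
          * Real.exp (t * ∑ k : Fin (n+1), D ((e (s, q)) k.castSucc) ((e (s, q)) k.succ))
        = (((∏ k : Fin n, P (q k.castSucc) (q k.succ)) * ν (q 0))
            * Real.exp (t * ∑ k : Fin n, D (q k.castSucc) (q k.succ)))
          * (P (q (Fin.last n)) s * Real.exp (t * D (q (Fin.last n)) s)) := by
      intro q s
      have hesnoc : (e (s, q) : Fin (n+2) → S) = Fin.snoc q s := rfl
      rw [hesnoc, snoc_prod P q s, snoc_sumD D q s, snoc_zero q s, mul_add, Real.exp_add]
      ring
    calc ∑ q : Fin (n+1) → S, ∑ s : S,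
          ((∏ k : Fin (n+1), P ((e (s, q)) k.castSucc) ((e (s, q)) k.succ)) * ν ((e (s, q)) 0))
            * Real.exp (t * ∑ k : Fin (n+1), D ((e (s, q)) k.castSucc) ((e (s, q)) k.succ))
        = ∑ q : Fin (n+1) → S,
            (((∏ k : Fin n, P (q k.castSucc) (q k.succ)) * ν (q 0))
              * Real.exp (t * ∑ k : Fin n, D (q k.castSucc) (q k.succ)))
            * ∑ s : S, P (q (Fin.last n)) s * Real.exp (t * D (q (Fin.last n)) s) := by
          apply Finset.sum_congr rfl
          intro q _
          rw [Finset.mul_sum]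
          exact Finset.sum_congr rfl fun s _ => heval q s
      _ ≤ ∑ q : Fin (n+1) → S,
            (((∏ k : Fin n, P (q k.castSucc) (q k.succ)) * ν (q 0))
              * Real.exp (t * ∑ k : Fin n, D (q k.castSucc) (q k.succ)))
            * Real.cosh (t * B) := by
          apply Finset.sum_le_sum
          intro q _
          apply mul_le_mul_of_nonneg_left
          · exact weighted_exp_bound (fun s => P (q (Fin.last n)) s)
              (fun s => D (q (Fin.last n)) s) B t hB (fun s => hP0 _ s)
              (hP1 _) (hmean _) (fun s => hbd _ s)
          · apply mul_nonneg (mul_nonneg ?_ (hν0 _)) (Real.exp_nonneg _)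
            exact Finset.prod_nonneg fun k _ => hP0 _ _
      _ ≤ Real.cosh (t * B) ^ (n + 1) := by
          rw [← Finset.sum_mul, pow_succ]
          exact mul_le_mul_of_nonneg_right ih (Real.cosh_pos _).le
end

lemma cyl_measure {S : Type} [Fintype S] [DecidableEq S] {Ω : Type} [MeasurableSpace Ω]
    (μ : Measure Ω) (X : ℕ → Ω → S) (P : Matrix S S ℝ) (hP0 : ∀ p q, 0 ≤ P p q)
    (hMarkov : ∀ (n : ℕ) (path : ℕ → S), μ {ω | ∀ k ≤ n + 1, X k ω = path k}
        = ENNReal.ofReal (P (path n) (path (n + 1))) * μ {ω | ∀ k ≤ n, X k ω = path k})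
    (n : ℕ) (p : Fin (n+1) → S) :
    μ {ω | ∀ k : Fin (n+1), X k ω = p k}
      = ENNReal.ofReal (∏ k : Fin n, P (p k.castSucc) (p k.succ)) * μ {ω | X 0 ω = p 0} := by
  set path : ℕ → S := fun k => p ⟨min k n, Nat.lt_succ_of_le (Nat.min_le_right k n)⟩ with hpath
  have claim : ∀ m : ℕ, μ {ω | ∀ k ≤ m, X k ω = path k}
      = ENNReal.ofReal (∏ k ∈ Finset.range m, P (path k) (path (k+1)))
        * μ {ω | X 0 ω = path 0} := by
    intro m
    induction m with
    | zero =>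
      have hset : {ω | ∀ k ≤ 0, X k ω = path k} = {ω | X 0 ω = path 0} := by
        ext ω
        simp only [Set.mem_setOf_eq, Nat.le_zero]
        constructor
        · intro h; exact h 0 rfl
        · intro h k hk; subst hk; exact h
      rw [hset]
      simp
    | succ m ih =>
      rw [hMarkov m path, ih, ← mul_assoc, ← ENNReal.ofReal_mul (hP0 _ _)]
      congr 2
      rw [Finset.prod_range_succ]
      ring
  have hmain := claim n
  have hset2 : {ω | ∀ k ≤ n, X k ω = path k} = {ω | ∀ k : Fin (n+1), X k ω = p k} := by
    ext ω
    simp only [Set.mem_setOf_eq]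
    constructor
    · intro h k
      have hk : (k : ℕ) ≤ n := Fin.is_le k
      have := h k hk
      rw [this, hpath]
      simp only
      have he : (⟨min (↑k) n, Nat.lt_succ_of_le (Nat.min_le_right _ n)⟩ : Fin (n+1)) = k := by
        ext; simp [Nat.min_eq_left hk]
      rw [he]
    · intro h k hk
      have := h ⟨k, Nat.lt_succ_of_le hk⟩
      simp only at this
      rw [this, hpath]
      simp only
      have he : (⟨min k n, Nat.lt_succ_of_le (Nat.min_le_right _ n)⟩ : Fin (n+1))
          = ⟨k, Nat.lt_succ_of_le hk⟩ := by
        ext; simp [Nat.min_eq_left hk]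
      rw [he]
  have hprod : ∏ k ∈ Finset.range n, P (path k) (path (k+1))
      = ∏ k : Fin n, P (p k.castSucc) (p k.succ) := by
    rw [← Fin.prod_univ_eq_prod_range (fun k => P (path k) (path (k+1))) n]
    apply Finset.prod_congr rfl
    intro k _
    have h1 : path (k : ℕ) = p k.castSucc := by
      rw [hpath]; simp only
      have he : (⟨min (↑k) n, Nat.lt_succ_of_le (Nat.min_le_right _ n)⟩ : Fin (n+1))
          = k.castSucc := by
        ext; have := k.isLt; simp
      rw [he]
    have h2 : path ((k : ℕ) + 1) = p k.succ := by
      rw [hpath]; simp only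
      have he : (⟨min ((k:ℕ)+1) n, Nat.lt_succ_of_le (Nat.min_le_right _ n)⟩ : Fin (n+1))
          = k.succ := by
        ext; have := k.isLt; simp
      rw [he]
    rw [h1, h2]
  have h0 : path 0 = p 0 := by
    rw [hpath]; simp only
    have he : (⟨min 0 n, Nat.lt_succ_of_le (Nat.min_le_right _ n)⟩ : Fin (n+1))
        = 0 := by
      ext; simp
    rw [he]
  rw [hset2, hprod, h0] at hmain
  exact hmain

/-- For an irreducible finite-state time-homogeneous Markov chain with stationary
distribution `π`, the sojourn time `s_n(S')` of any set of states `S'` satisfies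
`P(|s_n(S') − π(S')| ≤ ε) ≥ 1 − e^{−Cn}` for some `C > 0` and all large enough `n`. -/
theorem stmt9 (S : Type) [Fintype S] [DecidableEq S] [Nonempty S]
    [MeasurableSpace S] [MeasurableSingletonClass S]
    -- a (row) stochastic transition matrix
    (P : Matrix S S ℝ) (hP0 : ∀ p q, 0 ≤ P p q) (hP1 : ∀ p, ∑ q, P p q = 1)
    -- irreducibility
    (hirr : ∀ p q : S, ∃ n : ℕ, 1 ≤ n ∧ 0 < (P ^ n) p q)
    -- the stationary distribution
    (π : S → ℝ) (hπ0 : ∀ p, 0 ≤ π p) (hπ1 : ∑ p, π p = 1)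
    (hπstat : ∀ q, ∑ p, π p * P p q = π q)
    -- the Markov chain `X` with transition matrix `P`
    (Ω : Type) [MeasurableSpace Ω] (μ : Measure Ω) [IsProbabilityMeasure μ]
    (X : ℕ → Ω → S) (hXm : ∀ n, Measurable (X n))
    (hMarkov : ∀ (n : ℕ) (path : ℕ → S),
      μ {ω | ∀ k ≤ n + 1, X k ω = path k}
        = ENNReal.ofReal (P (path n) (path (n + 1))) * μ {ω | ∀ k ≤ n, X k ω = path k})
    (S' : Finset S) (ε : ℝ) (hε : 0 < ε) :
    ∃ C > 0, ∃ n₀ : ℕ, ∀ n ≥ n₀,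
      1 - Real.exp (-(C * n)) ≤
        (μ {ω | |(1 / (n : ℝ)) * (∑ k ∈ Finset.Icc 1 n, if X k ω ∈ S' then (1 : ℝ) else 0)
            - ∑ p ∈ S', π p| ≤ ε}).toReal := by
  classical
  set f : S → ℝ := fun p => if p ∈ S' then (1:ℝ) else 0 with hf
  set c : ℝ := ∑ p ∈ S', π p with hc
  have hcc : ∑ q, π q * f q = c := by
    rw [hc, hf]
    simp only [mul_ite, mul_one, mul_zero]
    rw [Finset.sum_ite_mem, Finset.univ_inter]
  obtain ⟨g, hg⟩ := poisson_solution P hP0 hP1 hirr π hπ1 hπstat f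
  set Pg : S → ℝ := fun p => ∑ q, P p q * g q with hPgdef
  have hpois : ∀ p, g p - Pg p = f p - c := by
    intro p
    rw [← hcc]
    exact hg p
  obtain ⟨M, hM⟩ := Finite.exists_le (fun p => |g p|)
  set K : ℝ := max M 0 with hK
  have hK0 : 0 ≤ K := le_max_right _ _
  have hgK : ∀ p, |g p| ≤ K := fun p => (hM p).trans (le_max_left _ _)
  set B : ℝ := 2 * K + 1 with hB
  have hBpos : 0 < B := by rw [hB]; linarith
  have hPgK : ∀ p, |Pg p| ≤ K := by
    intro p
    rw [hPgdef]
    calc |∑ q, P p q * g q| ≤ ∑ q, |P p q * g q| := Finset.abs_sum_le_sum_abs _ _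
      _ ≤ ∑ q, P p q * K := by
          apply Finset.sum_le_sum
          intro q _
          rw [abs_mul, abs_of_nonneg (hP0 p q)]
          exact mul_le_mul_of_nonneg_left (hgK q) (hP0 p q)
      _ = K := by rw [← Finset.sum_mul, hP1, one_mul]
  set D : S → S → ℝ := fun u v => g v - Pg u with hD
  have hDb : ∀ u v, |D u v| ≤ B := by
    intro u v
    rw [hD]
    simp only
    calc |g v - Pg u| ≤ |g v| + |Pg u| := abs_sub _ _
      _ ≤ K + K := add_le_add (hgK v) (hPgK u)
      _ ≤ B := by rw [hB]; linarith
  have hDmean : ∀ u, ∑ v, P u v * D u v = 0 := by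
    intro u
    rw [hD]
    simp only
    simp_rw [mul_sub]
    rw [Finset.sum_sub_distrib, ← Finset.sum_mul, hP1, one_mul]
    have h1 : ∑ v, P u v * g v = Pg u := rfl
    rw [h1, sub_self]
  obtain ⟨t, ht0, htlt⟩ := exists_good_t B (ε/2) hBpos (by linarith)
  set r : ℝ := Real.cosh (t*B) * Real.exp (-(t*(ε/2))) with hr
  have hr0 : 0 < r := mul_pos (Real.cosh_pos _) (Real.exp_pos _)
  have hr1 : r < 1 := by
    rw [hr]
    have h2 := mul_lt_mul_of_pos_right htlt (Real.exp_pos (-(t*(ε/2))))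
    rwa [← Real.exp_add, add_neg_cancel, Real.exp_zero] at h2
  have hlogr : Real.log r < 0 := Real.log_neg hr0 hr1
  set C : ℝ := -Real.log r / 2 with hC
  have hC0 : 0 < C := by rw [hC]; linarith
  refine ⟨C, hC0, max (max 1 ⌈2*B/ε⌉₊) ⌈Real.log 2 / C⌉₊, ?_⟩
  intro n hn
  have hn1 : 1 ≤ n := le_trans (le_trans (le_max_left _ _) (le_max_left _ _)) hn
  have hnpos : (0:ℝ) < n := by exact_mod_cast Nat.lt_of_lt_of_le Nat.zero_lt_one hn1
  have hnB : B ≤ (n:ℝ) * ε / 2 := by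
    have h1 : (⌈2*B/ε⌉₊ : ℝ) ≤ n := by
      exact_mod_cast le_trans (le_trans (le_max_right _ _) (le_max_left _ _)) hn
    have h2 : 2*B/ε ≤ (n:ℝ) := le_trans (Nat.le_ceil _) h1
    rw [div_le_iff₀ hε] at h2
    linarith
  have hnC : Real.log 2 ≤ (n:ℝ) * C := by
    have h1 : (⌈Real.log 2 / C⌉₊ : ℝ) ≤ n := by
      exact_mod_cast le_trans (le_max_right _ _) hn
    have h2 : Real.log 2 / C ≤ (n:ℝ) := le_trans (Nat.le_ceil _) h1
    rw [div_le_iff₀ hC0] at h2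
    linarith
  -- initial distribution
  set ν : S → ℝ := fun s => (μ {ω | X 0 ω = s}).toReal with hν
  have hν0 : ∀ s, 0 ≤ ν s := fun s => ENNReal.toReal_nonneg
  have hν1 : ∑ s, ν s = 1 := by
    have hall : ∑ s, μ {ω | X 0 ω = s} = 1 := by
      have h1 : ∀ s : S, {ω | X 0 ω = s} = X 0 ⁻¹' {s} := fun s => rfl
      simp_rw [h1]
      rw [sum_measure_preimage_singleton (Finset.univ : Finset S)
        (fun y _ => (hXm 0) (measurableSet_singleton y))]
      rw [Finset.coe_univ, Set.preimage_univ, measure_univ]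
    rw [hν]
    simp only
    rw [← ENNReal.toReal_sum (fun s _ => measure_ne_top μ _), hall, ENNReal.toReal_one]
  -- cylinders
  set Cy : (Fin (n+1) → S) → Set Ω := fun p => {ω | ∀ k : Fin (n+1), X k ω = p k} with hCy
  have hCymeas : ∀ p, MeasurableSet (Cy p) := by
    intro p
    rw [hCy]
    have h1 : {ω | ∀ k : Fin (n+1), X k ω = p k} = ⋂ k : Fin (n+1), X k ⁻¹' {p k} := by
      ext ω
      simp [Set.mem_iInter]
    simp only
    rw [h1]
    exact MeasurableSet.iInter fun k => (hXm k) (measurableSet_singleton _)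
  set W : (Fin (n+1) → S) → ℝ :=
    fun p => (∏ k : Fin n, P (p k.castSucc) (p k.succ)) * ν (p 0) with hW
  have hWm : ∀ p, (μ (Cy p)).toReal = W p := by
    intro p
    rw [hCy, hW]
    simp only
    rw [cyl_measure μ X P hP0 hMarkov n p, ENNReal.toReal_mul,
      ENNReal.toReal_ofReal (Finset.prod_nonneg fun k _ => hP0 _ _)]
  have hW0 : ∀ p, 0 ≤ W p := by
    intro p
    rw [hW]
    exact mul_nonneg (Finset.prod_nonneg fun k _ => hP0 _ _) (hν0 _)
  set a : ℝ := (n:ℝ) * ε / 2 with haa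
  -- generic tail bound
  have tail : ∀ (D' : S → S → ℝ), (∀ u, ∑ v, P u v * D' u v = 0) → (∀ u v, |D' u v| ≤ B) →
      (μ (⋃ p ∈ Finset.univ.filter
          (fun p : Fin (n+1) → S => a ≤ ∑ k : Fin n, D' (p k.castSucc) (p k.succ)), Cy p)).toReal
        ≤ r ^ n := by
    intro D' hmean' hbd'
    set F := Finset.univ.filter
      (fun p : Fin (n+1) → S => a ≤ ∑ k : Fin n, D' (p k.castSucc) (p k.succ)) with hF
    have step1 : (μ (⋃ p ∈ F, Cy p)).toReal ≤ ∑ p ∈ F, W p := by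
      have h1 : μ (⋃ p ∈ F, Cy p) ≤ ∑ p ∈ F, μ (Cy p) := measure_biUnion_finset_le F Cy
      have h2 : (∑ p ∈ F, μ (Cy p)) ≠ ⊤ :=
        ENNReal.sum_ne_top.mpr fun p _ => measure_ne_top μ _
      calc (μ (⋃ p ∈ F, Cy p)).toReal ≤ (∑ p ∈ F, μ (Cy p)).toReal :=
            ENNReal.toReal_mono h2 h1
        _ = ∑ p ∈ F, (μ (Cy p)).toReal := ENNReal.toReal_sum fun p _ => measure_ne_top μ _
        _ = ∑ p ∈ F, W p := Finset.sum_congr rfl fun p _ => hWm p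
    refine step1.trans ?_
    calc ∑ p ∈ F, W p
        ≤ ∑ p ∈ F, W p * Real.exp (t * ((∑ k : Fin n, D' (p k.castSucc) (p k.succ)) - a)) := by
          apply Finset.sum_le_sum
          intro p hp
          rw [hF, Finset.mem_filter] at hp
          refine le_mul_of_one_le_right (hW0 p) (Real.one_le_exp ?_)
          exact mul_nonneg ht0.le (by linarith [hp.2])
      _ ≤ ∑ p : Fin (n+1) → S,
            W p * Real.exp (t * ((∑ k : Fin n, D' (p k.castSucc) (p k.succ)) - a)) := by
          apply Finset.sum_le_sum_of_subset_of_nonneg (Finset.filter_subset _ _)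
          intro p _ _
          exact mul_nonneg (hW0 p) (Real.exp_nonneg _)
      _ = Real.exp (-(t*a)) * ∑ p : Fin (n+1) → S,
            W p * Real.exp (t * ∑ k : Fin n, D' (p k.castSucc) (p k.succ)) := by
          rw [Finset.mul_sum]
          apply Finset.sum_congr rfl
          intro p _
          have h3 : t * ((∑ k : Fin n, D' (p k.castSucc) (p k.succ)) - a)
              = (t * ∑ k : Fin n, D' (p k.castSucc) (p k.succ)) + (-(t*a)) := by ring
          rw [h3, Real.exp_add]
          ring
      _ ≤ Real.exp (-(t*a)) * Real.cosh (t*B) ^ n := by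
          apply mul_le_mul_of_nonneg_left _ (Real.exp_nonneg _)
          exact chernoff_sum P hP0 hP1 ν hν0 hν1 D' B t hBpos hmean' hbd' n
      _ = r ^ n := by
          rw [hr, mul_pow, ← Real.exp_nat_mul]
          have h4 : -(t*a) = (n:ℝ) * (-(t*(ε/2))) := by rw [haa]; ring
          rw [h4]
          ring
  have htail1 := tail D hDmean hDb
  have htail2 := tail (fun u v => -(D u v))
    (by intro u; simp only [mul_neg]; rw [Finset.sum_neg_distrib, hDmean u, neg_zero])
    (by intro u v; rw [abs_neg]; exact hDb u v)
  set F1 := Finset.univ.filter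
    (fun p : Fin (n+1) → S => a ≤ ∑ k : Fin n, D (p k.castSucc) (p k.succ)) with hF1
  set F2 := Finset.univ.filter
    (fun p : Fin (n+1) → S => a ≤ ∑ k : Fin n, -(D (p k.castSucc) (p k.succ))) with hF2
  set A1 : Set Ω := ⋃ p ∈ F1, Cy p with hA1
  set A2 : Set Ω := ⋃ p ∈ F2, Cy p with hA2
  have hA1m : MeasurableSet A1 := F1.measurableSet_biUnion fun p _ => hCymeas p
  have hA2m : MeasurableSet A2 := F2.measurableSet_biUnion fun p _ => hCymeas p
  -- inclusion of complement into the target event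
  have hsub : (A1 ∪ A2)ᶜ ⊆ {ω | |(1 / (n : ℝ)) * (∑ k ∈ Finset.Icc 1 n,
      if X k ω ∈ S' then (1 : ℝ) else 0) - c| ≤ ε} := by
    intro ω hω
    rw [Set.mem_compl_iff, Set.mem_union] at hω
    push_neg at hω
    obtain ⟨hω1, hω2⟩ := hω
    set pω : Fin (n+1) → S := fun k => X k ω with hpω
    have hmem : ω ∈ Cy pω := by rw [hCy]; intro k; rfl
    have h1 : ¬ (a ≤ ∑ k : Fin n, D (pω k.castSucc) (pω k.succ)) := by
      intro hcon
      have hpF1 : pω ∈ F1 := by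
        rw [hF1]
        exact Finset.mem_filter.mpr ⟨Finset.mem_univ _, hcon⟩
      exact hω1 (by rw [hA1]; exact Set.mem_iUnion₂.mpr ⟨pω, hpF1, hmem⟩)
    have h2 : ¬ (a ≤ ∑ k : Fin n, -(D (pω k.castSucc) (pω k.succ))) := by
      intro hcon
      have hpF2 : pω ∈ F2 := by
        rw [hF2]
        exact Finset.mem_filter.mpr ⟨Finset.mem_univ _, hcon⟩
      exact hω2 (by rw [hA2]; exact Set.mem_iUnion₂.mpr ⟨pω, hpF2, hmem⟩)
    rw [Finset.sum_neg_distrib] at h2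
    set Z : ℝ := ∑ k : Fin n, D (pω k.castSucc) (pω k.succ) with hZ
    have hZa : |Z| ≤ a := abs_le.mpr ⟨by linarith [lt_of_not_ge h2], (lt_of_not_ge h1).le⟩
    -- the sojourn sum identity
    have hsum : ∑ k ∈ Finset.Icc 1 n, (if X k ω ∈ S' then (1:ℝ) else 0)
        = ∑ k : Fin n, f (pω k.succ) := by
      rw [← Finset.Ico_add_one_right_eq_Icc, Finset.sum_Ico_eq_sum_range]
      have hn' : n + 1 - 1 = n := by omega
      rw [hn', ← Fin.sum_univ_eq_sum_range (fun i => if X (1 + i) ω ∈ S' then (1:ℝ) else 0) n]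
      apply Finset.sum_congr rfl
      intro k _
      have h3 : pω k.succ = X (1 + (k:ℕ)) ω := by
        rw [hpω]
        simp only
        congr 1
        simp [Fin.val_succ]
        omega
      rw [hf, h3]
    have htele : ∑ k : Fin n, f (pω k.succ) - (n:ℝ) * c
        = Z + (Pg (pω 0) - Pg (pω (Fin.last n))) := by
      have h4 : ∑ k : Fin n, (f (pω k.succ) - c)
          = Z + (Pg (pω 0) - Pg (pω (Fin.last n))) := by
        have h5 : ∀ k : Fin n, f (pω k.succ) - c
            = D (pω k.castSucc) (pω k.succ)
              + ((fun j => Pg (pω j)) k.castSucc - (fun j => Pg (pω j)) k.succ) := by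
          intro k
          rw [← hpois (pω k.succ), hD]
          simp only
          ring
        simp_rw [h5]
        rw [Finset.sum_add_distrib, fin_telescope (fun j => Pg (pω j)), ← hZ]
      rw [← h4, Finset.sum_sub_distrib]
      congr 1
      rw [Finset.sum_const, Finset.card_univ, Fintype.card_fin]
      simp [nsmul_eq_mul]
    -- conclude
    rw [Set.mem_setOf_eq]
    have hPgd : |Pg (pω 0) - Pg (pω (Fin.last n))| ≤ B := by
      calc |Pg (pω 0) - Pg (pω (Fin.last n))| ≤ |Pg (pω 0)| + |Pg (pω (Fin.last n))| := abs_sub _ _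
        _ ≤ K + K := add_le_add (hPgK _) (hPgK _)
        _ ≤ B := by rw [hB]; linarith
    have hfin : |(∑ k ∈ Finset.Icc 1 n, (if X k ω ∈ S' then (1:ℝ) else 0)) - (n:ℝ) * c|
        ≤ (n:ℝ) * ε := by
      rw [hsum, htele]
      calc |Z + (Pg (pω 0) - Pg (pω (Fin.last n)))|
          ≤ |Z| + |Pg (pω 0) - Pg (pω (Fin.last n))| := abs_add_le _ _
        _ ≤ a + B := add_le_add hZa hPgd
        _ ≤ (n:ℝ) * ε := by rw [haa]; linarith
    have h6 : (1 / (n : ℝ)) * (∑ k ∈ Finset.Icc 1 n, if X k ω ∈ S' then (1 : ℝ) else 0) - c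
        = ((∑ k ∈ Finset.Icc 1 n, (if X k ω ∈ S' then (1:ℝ) else 0)) - (n:ℝ) * c) / n := by
      field_simp
    rw [h6, abs_div, abs_of_pos hnpos, div_le_iff₀ hnpos]
    linarith [hfin]
  -- final computation
  have hexp : 2 * r ^ n ≤ Real.exp (-(C*(n:ℝ))) := by
    have h7 : r ^ n = Real.exp ((n:ℝ) * Real.log r) := by
      rw [Real.exp_nat_mul, Real.exp_log hr0]
    have h8 : (2:ℝ) = Real.exp (Real.log 2) := (Real.exp_log two_pos).symm
    rw [h7, h8, ← Real.exp_add]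
    apply Real.exp_le_exp.mpr
    have h9 : Real.log r = -(2*C) := by rw [hC]; ring
    rw [h9]
    nlinarith [hnC]
  have hμ1 : (μ A1).toReal ≤ r ^ n := htail1
  have hμ2 : (μ A2).toReal ≤ r ^ n := htail2
  have hcompl : (μ ((A1 ∪ A2)ᶜ)).toReal = 1 - (μ (A1 ∪ A2)).toReal := by
    rw [measure_compl (hA1m.union hA2m) (measure_ne_top μ _), measure_univ]
    rw [ENNReal.toReal_sub_of_le prob_le_one ENNReal.one_ne_top, ENNReal.toReal_one]
  have hunion : (μ (A1 ∪ A2)).toReal ≤ (μ A1).toReal + (μ A2).toReal := by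
    have h10 : μ (A1 ∪ A2) ≤ μ A1 + μ A2 := measure_union_le _ _
    have h11 : μ A1 + μ A2 ≠ ⊤ :=
      ENNReal.add_ne_top.mpr ⟨measure_ne_top μ _, measure_ne_top μ _⟩
    calc (μ (A1 ∪ A2)).toReal ≤ (μ A1 + μ A2).toReal := ENNReal.toReal_mono h11 h10
      _ = (μ A1).toReal + (μ A2).toReal := ENNReal.toReal_add (measure_ne_top μ _) (measure_ne_top μ _)
  calc 1 - Real.exp (-(C * n)) ≤ 1 - 2 * r ^ n := by linarith [hexp]
    _ ≤ 1 - (μ (A1 ∪ A2)).toReal := by linarith [hunion, hμ1, hμ2]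
    _ = (μ ((A1 ∪ A2)ᶜ)).toReal := hcompl.symm
    _ ≤ _ := ENNReal.toReal_mono (measure_ne_top μ _) (measure_mono hsub)
end
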